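/- arXiv:2603.18574 — 6 statements merged into one kernel-verified Lean document; each statement's English description precedes it below -/
import Mathlib

section
/- For every integer n ≥ 1, the componentwise reduction map O → ∏_{i∈ℕ} O_i/π_i^n × O_∞/π_∞^n is a ring homomorphism whose kernel is π^n·O and whose image is exactly the subring consisting of those elements x = (x_1, x_2, …, x_∞) for which there exists an integer B ≥ n such that x_i equals the reduction mod π_i^n of ψ_i(x_∞) for all i ≥ B. In particular, O/π^n O is isomorphic to this subring of ∏_{i∈ℕ} O_i/π_i^n × O_∞/π_∞^n. -/
open PowerSeries

set_option maxHeartbeats 1000000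
set_option synthInstance.maxHeartbeats 400000

noncomputable section

variable (k : Type) [Field k]
variable (O : ℕ → Type) [∀ i, CommRing (O i)]
variable (π : ∀ i, O i) (e : ℕ → ℕ)
variable (ψ : ∀ i, ((PowerSeries k) ⧸ (Ideal.span {(X : PowerSeries k) ^ e i})) ≃+*
    ((O i) ⧸ (Ideal.span {π i ^ e i})))
variable (hψ : ∀ i, ψ i (Ideal.Quotient.mk _ (X : PowerSeries k)) = Ideal.Quotient.mk _ (π i))

/-- The product ring `∏_{i ∈ ℕ} O_i × O_∞`, where `O_∞ = k[[π_∞]]`. -/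
abbrev ProdRing : Type := ((i : ℕ) → O i) × PowerSeries k

/-- The defining condition for membership in the subring `O`:
for every `n ≥ 1` there is `B ≥ n` such that for all `i ≥ B` the `i`-th coordinate is
congruent to (a lift of) `ψ_i` of the `∞`-coordinate modulo `π_i^n`. -/
def closeMem (x : ProdRing k O) : Prop :=
  ∀ n : ℕ, 1 ≤ n → ∃ B, n ≤ B ∧ ∀ i, B ≤ i → ∃ y : O i,
    Ideal.Quotient.mk (Ideal.span {π i ^ e i}) y
      = ψ i (Ideal.Quotient.mk (Ideal.span {(X : PowerSeries k) ^ e i}) x.2)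
    ∧ x.1 i - y ∈ Ideal.span {π i ^ n}

/-- The ring `O` of a family of close fields, as a subring of `∏_{i ∈ ℕ} O_i × O_∞`. -/
def closeSubring : Subring (ProdRing k O) where
  carrier := {x | closeMem k O π e ψ x}
  zero_mem' := by
    intro n hn
    refine ⟨n, le_rfl, fun i hi => ⟨0, by simp, by simp⟩⟩
  one_mem' := by
    intro n hn
    refine ⟨n, le_rfl, fun i hi => ⟨1, by simp, by simp⟩⟩
  add_mem' := by
    intro a b ha hb n hn
    obtain ⟨B1, hB1, h1⟩ := ha n hn
    obtain ⟨B2, hB2, h2⟩ := hb n hn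
    refine ⟨max B1 B2, hB1.trans (le_max_left _ _), fun i hi => ?_⟩
    obtain ⟨y1, hy1, hy1'⟩ := h1 i ((le_max_left _ _).trans hi)
    obtain ⟨y2, hy2, hy2'⟩ := h2 i ((le_max_right _ _).trans hi)
    refine ⟨y1 + y2, ?_, ?_⟩
    · have : (a + b).2 = a.2 + b.2 := rfl
      rw [this, map_add, map_add, map_add, hy1, hy2]
    · have : (a + b).1 i - (y1 + y2) = (a.1 i - y1) + (b.1 i - y2) := by
        show a.1 i + b.1 i - (y1 + y2) = _
        ring
      rw [this]
      exact Ideal.add_mem _ hy1' hy2'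
  neg_mem' := by
    intro a ha n hn
    obtain ⟨B, hB, h⟩ := ha n hn
    refine ⟨B, hB, fun i hi => ?_⟩
    obtain ⟨y, hy, hy'⟩ := h i hi
    refine ⟨-y, ?_, ?_⟩
    · have : (-a).2 = -a.2 := rfl
      rw [this, map_neg, map_neg, map_neg, hy]
    · have : (-a).1 i - (-y) = -(a.1 i - y) := by
        show -a.1 i - (-y) = _
        ring
      rw [this]
      exact neg_mem hy'
  mul_mem' := by
    intro a b ha hb n hn
    obtain ⟨B1, hB1, h1⟩ := ha n hn
    obtain ⟨B2, hB2, h2⟩ := hb n hn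
    refine ⟨max B1 B2, hB1.trans (le_max_left _ _), fun i hi => ?_⟩
    obtain ⟨y1, hy1, hy1'⟩ := h1 i ((le_max_left _ _).trans hi)
    obtain ⟨y2, hy2, hy2'⟩ := h2 i ((le_max_right _ _).trans hi)
    refine ⟨y1 * y2, ?_, ?_⟩
    · have : (a * b).2 = a.2 * b.2 := rfl
      rw [this, map_mul, map_mul, map_mul, hy1, hy2]
    · have : (a * b).1 i - (y1 * y2) = (a.1 i - y1) * b.1 i + y1 * (b.1 i - y2) := by
        show a.1 i * b.1 i - (y1 * y2) = _
        ring
      rw [this]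
      exact Ideal.add_mem _ (Ideal.mul_mem_right _ _ hy1') (Ideal.mul_mem_left _ _ hy2')

/-- The element `π = (π_1, π_2, …, π_∞)` of `O`. -/
def piO : closeSubring k O π e ψ :=
  ⟨(π, (X : PowerSeries k)), by
    intro n hn
    exact ⟨n, le_rfl, fun i hi => ⟨π i, (hψ i).symm, by simp⟩⟩⟩

/-- The ring `F = O[1/π]`. -/
abbrev Fring : Type := Localization.Away (piO k O π e ψ hψ)

/-- Coordinate projection `O → O_j` for `j ∈ ℕ`. -/
def projO (j : ℕ) : closeSubring k O π e ψ →+* O j :=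
  (Pi.evalRingHom O j).comp ((RingHom.fst _ _).comp (closeSubring k O π e ψ).subtype)

/-- Coordinate projection `O → O_∞`. -/
def projInf : closeSubring k O π e ψ →+* PowerSeries k :=
  (RingHom.snd _ _).comp (closeSubring k O π e ψ).subtype

/-- The product ring `∏_{i ≥ B} O_i × O_∞`. -/
abbrev ProdRingGe (B : ℕ) : Type := ((i : {i : ℕ // B ≤ i}) → O i.1) × PowerSeries k

/-- The projection `∏_{i ∈ ℕ} O_i × O_∞ → ∏_{i ≥ B} O_i × O_∞`. -/
def projGe (B : ℕ) : ProdRing k O →+* ProdRingGe k O B :=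
  RingHom.prodMap (Pi.ringHom fun i => Pi.evalRingHom O i.1) (RingHom.id _)

/-- The composite `O → ∏_{i ≥ B} O_i × O_∞`. -/
def toGe (B : ℕ) : closeSubring k O π e ψ →+* ProdRingGe k O B :=
  (projGe k O B).comp (closeSubring k O π e ψ).subtype

/-- `O_{≥ B}`, the image of `O` under the coordinate projection. -/
def OgeB (B : ℕ) : Subring (ProdRingGe k O B) := (toGe k O π e ψ B).range

/-- The projection `O → O_{≥ B}`. -/
def toOgeB (B : ℕ) : closeSubring k O π e ψ →+* OgeB k O π e ψ B :=
  (toGe k O π e ψ B).rangeRestrict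

/-- The image of `π` in `O_{≥ B}`. -/
def piGe (B : ℕ) : OgeB k O π e ψ B := toOgeB k O π e ψ B (piO k O π e ψ hψ)

/-- The ring `F_{≥ B} = O_{≥ B}[1/π]`. -/
abbrev FgeB (B : ℕ) : Type := Localization.Away (piGe k O π e ψ hψ B)

/-- The projection `F → F_{≥ B}`. -/
def projFge (B : ℕ) : Fring k O π e ψ hψ →+* FgeB k O π e ψ hψ B :=
  Localization.awayLift
    ((algebraMap (OgeB k O π e ψ B) (FgeB k O π e ψ hψ B)).comp (toOgeB k O π e ψ B))
    (piO k O π e ψ hψ)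
    (IsLocalization.map_units (M := Submonoid.powers (piGe k O π e ψ hψ B)) _
      ⟨piGe k O π e ψ hψ B, Submonoid.mem_powers _⟩)

/-- The target ring `∏_{i ∈ ℕ} O_i/π_i^n × O_∞/π_∞^n`. -/
abbrev QuotRing (n : ℕ) : Type :=
  ((i : ℕ) → O i ⧸ Ideal.span {π i ^ n}) × ((PowerSeries k) ⧸ Ideal.span {(X : PowerSeries k) ^ n})

/-- The componentwise reduction map on the ambient product ring. -/
def reduceHom (n : ℕ) : ProdRing k O →+* QuotRing k O π n :=
  RingHom.prodMap
    (Pi.ringHom fun i => (Ideal.Quotient.mk (Ideal.span {π i ^ n})).comp (Pi.evalRingHom O i))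
    (Ideal.Quotient.mk (Ideal.span {(X : PowerSeries k) ^ n}))

/-- The componentwise reduction map `O → ∏_{i ∈ ℕ} O_i/π_i^n × O_∞/π_∞^n`. -/
def reduceO (n : ℕ) : closeSubring k O π e ψ →+* QuotRing k O π n :=
  (reduceHom k O π n).comp (closeSubring k O π e ψ).subtype


/-- Computation of the reduction map on an element of `O`. -/
lemma reduceO_apply (n : ℕ) (x : closeSubring k O π e ψ) :
    reduceO k O π e ψ n x =
      (fun i => Ideal.Quotient.mk (Ideal.span {π i ^ n}) (x.val.1 i),
       Ideal.Quotient.mk (Ideal.span {(X : PowerSeries k) ^ n}) x.val.2) := rfl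

/-- Value of powers of `π` in the ambient product ring. -/
lemma piO_pow_val (n : ℕ) :
    (((piO k O π e ψ hψ) ^ n : closeSubring k O π e ψ) : ProdRing k O)
      = (fun i => π i ^ n, (X : PowerSeries k) ^ n) := by
  rw [SubmonoidClass.coe_pow]
  rfl

theorem statement_0
    (p : ℕ) (hp : p.Prime)
    (k : Type) [Field k] [CharP k p] [ExpChar k p] [PerfectRing k p]
    (O : ℕ → Type) [∀ i, CommRing (O i)] [∀ i, IsDomain (O i)]
    [∀ i, IsDiscreteValuationRing (O i)] [∀ i, CharZero (O i)]
    (π : ∀ i, O i) (hπ : ∀ i, Irreducible (π i))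
    [∀ i, IsAdicComplete (Ideal.span {π i}) (O i)]
    (ρ : ∀ i, ((O i) ⧸ (Ideal.span {π i})) ≃+* k)
    (e : ℕ → ℕ) (he : ∀ i, i ≤ e i)
    (hpe : ∀ i, Ideal.span {((p : O i))} = Ideal.span {π i ^ e i})
    (ψ : ∀ i, ((PowerSeries k) ⧸ (Ideal.span {(X : PowerSeries k) ^ e i})) ≃+*
      ((O i) ⧸ (Ideal.span {π i ^ e i})))
    (hψ : ∀ i, ψ i (Ideal.Quotient.mk _ (X : PowerSeries k)) = Ideal.Quotient.mk _ (π i))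
    (n : ℕ) (hn : 1 ≤ n) :
    RingHom.ker (reduceO k O π e ψ n) = Ideal.span {piO k O π e ψ hψ ^ n}
    ∧ (∀ x : QuotRing k O π n, x ∈ (reduceO k O π e ψ n).range ↔
        ∃ B, n ≤ B ∧ ∀ i, B ≤ i →
          ∃ (z : PowerSeries k) (y : O i),
            Ideal.Quotient.mk (Ideal.span {(X : PowerSeries k) ^ n}) z = x.2
            ∧ Ideal.Quotient.mk (Ideal.span {π i ^ e i}) y
                = ψ i (Ideal.Quotient.mk (Ideal.span {(X : PowerSeries k) ^ e i}) z)
            ∧ Ideal.Quotient.mk (Ideal.span {π i ^ n}) y = x.1 i)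
    ∧ Nonempty ((↥(closeSubring k O π e ψ) ⧸ Ideal.span {piO k O π e ψ hψ ^ n})
        ≃+* (reduceO k O π e ψ n).range) := by
  classical
  have hker : RingHom.ker (reduceO k O π e ψ n) = Ideal.span {piO k O π e ψ hψ ^ n} := by
    ext x
    simp only [RingHom.mem_ker, Ideal.mem_span_singleton]
    constructor
    · intro hx
      rw [reduceO_apply] at hx
      have h1 : ∀ i, π i ^ n ∣ x.val.1 i := by
        intro i
        rw [← Ideal.mem_span_singleton, ← Ideal.Quotient.eq_zero_iff_mem]
        exact congrFun (congrArg Prod.fst hx) i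
      have h2 : (X : PowerSeries k) ^ n ∣ x.val.2 := by
        rw [← Ideal.mem_span_singleton, ← Ideal.Quotient.eq_zero_iff_mem]
        exact congrArg Prod.snd hx
      choose w hw using h1
      obtain ⟨wi, hwi⟩ := h2
      have hmem : ((w, wi) : ProdRing k O) ∈ closeSubring k O π e ψ := by
        intro m hm
        obtain ⟨B, hB, h⟩ := x.2 (n + m) (by omega)
        refine ⟨max B (n + m), le_trans (by omega) (le_max_right _ _), fun i hi => ?_⟩
        obtain ⟨y, hy, hy'⟩ := h i (le_trans (le_max_left _ _) hi)
        obtain ⟨y'', hy''⟩ := Ideal.Quotient.mk_surjective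
          (ψ i (Ideal.Quotient.mk (Ideal.span {(X : PowerSeries k) ^ e i}) wi))
        refine ⟨y'', hy'', ?_⟩
        have he1 : π i ^ (n + m) ∣ π i ^ e i :=
          pow_dvd_pow _ (le_trans (le_trans (le_max_right _ _) hi) (he i))
        have key : Ideal.Quotient.mk (Ideal.span {π i ^ e i}) (π i ^ n * y'')
            = Ideal.Quotient.mk (Ideal.span {π i ^ e i}) y := by
          rw [map_mul, map_pow, hy'', ← hψ i, ← map_pow (ψ i), ← map_mul (ψ i),
            ← map_pow (Ideal.Quotient.mk (Ideal.span {(X : PowerSeries k) ^ e i})),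
            ← map_mul (Ideal.Quotient.mk (Ideal.span {(X : PowerSeries k) ^ e i})),
            ← hwi, hy]
        have h3 : π i ^ (n + m) ∣ y - π i ^ n * y'' := by
          have hk := Ideal.Quotient.eq.mp key.symm
          rw [Ideal.mem_span_singleton] at hk
          exact dvd_trans he1 hk
        have h4 : π i ^ (n + m) ∣ x.val.1 i - y := by
          rw [← Ideal.mem_span_singleton]; exact hy'
        have h5 : π i ^ (n + m) ∣ π i ^ n * (w i - y'') := by
          have heq : π i ^ n * (w i - y'') = (x.val.1 i - y) + (y - π i ^ n * y'') := by
            rw [mul_sub, ← hw i]; ring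
          rw [heq]; exact dvd_add h4 h3
        rw [Ideal.mem_span_singleton]
        rw [pow_add] at h5
        exact (mul_dvd_mul_iff_left (pow_ne_zero n (hπ i).ne_zero)).mp h5
      refine ⟨⟨((w, wi) : ProdRing k O), hmem⟩, ?_⟩
      apply Subtype.ext
      have hval : ((piO k O π e ψ hψ ^ n * ⟨((w, wi) : ProdRing k O), hmem⟩ :
          closeSubring k O π e ψ) : ProdRing k O)
          = (fun i => π i ^ n * w i, (X : PowerSeries k) ^ n * wi) := by
        rw [MulMemClass.coe_mul, piO_pow_val]
        rfl
      rw [hval]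
      exact Prod.ext_iff.mpr ⟨funext hw, hwi⟩
    · rintro ⟨v, rfl⟩
      rw [map_mul, map_pow]
      have hz : (reduceO k O π e ψ n) (piO k O π e ψ hψ) ^ n = 0 := by
        rw [← map_pow]
        rw [reduceO_apply]
        refine Prod.ext_iff.mpr ⟨funext fun i => ?_, ?_⟩
        · show Ideal.Quotient.mk (Ideal.span {π i ^ n}) ((π i) ^ n) = 0
          exact Ideal.Quotient.eq_zero_iff_mem.mpr (Ideal.mem_span_singleton_self _)
        · show Ideal.Quotient.mk (Ideal.span {(X : PowerSeries k) ^ n})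
            ((X : PowerSeries k) ^ n) = 0
          exact Ideal.Quotient.eq_zero_iff_mem.mpr (Ideal.mem_span_singleton_self _)
      rw [hz, zero_mul]
  have hrange : ∀ x : QuotRing k O π n, x ∈ (reduceO k O π e ψ n).range ↔
      ∃ B, n ≤ B ∧ ∀ i, B ≤ i →
        ∃ (z : PowerSeries k) (y : O i),
          Ideal.Quotient.mk (Ideal.span {(X : PowerSeries k) ^ n}) z = x.2
          ∧ Ideal.Quotient.mk (Ideal.span {π i ^ e i}) y
              = ψ i (Ideal.Quotient.mk (Ideal.span {(X : PowerSeries k) ^ e i}) z)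
          ∧ Ideal.Quotient.mk (Ideal.span {π i ^ n}) y = x.1 i := by
    intro x
    constructor
    · rintro ⟨a, rfl⟩
      obtain ⟨B, hB, h⟩ := a.2 n hn
      refine ⟨B, hB, fun i hi => ?_⟩
      obtain ⟨y, hy, hy'⟩ := h i hi
      refine ⟨a.val.2, y, rfl, hy, ?_⟩
      show Ideal.Quotient.mk (Ideal.span {π i ^ n}) y
        = Ideal.Quotient.mk (Ideal.span {π i ^ n}) (a.val.1 i)
      refine Ideal.Quotient.eq.mpr ?_
      have := neg_mem hy'
      rwa [neg_sub] at this
    · rintro ⟨B, hB, h⟩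
      choose z y hz hy hyx using h
      obtain ⟨zh, hzh⟩ := Ideal.Quotient.mk_surjective x.2
      choose yy hyy using fun i => Ideal.Quotient.mk_surjective (I := Ideal.span {π i ^ n}) (x.1 i)
      choose t ht using fun i => Ideal.Quotient.mk_surjective
        (ψ i (Ideal.Quotient.mk (Ideal.span {(X : PowerSeries k) ^ e i}) zh))
      have hmem : ((fun i => if B ≤ i then t i else yy i, zh) : ProdRing k O)
          ∈ closeSubring k O π e ψ := by
        intro m hm
        refine ⟨max m B, le_max_left _ _, fun i hi => ?_⟩
        have hBi : B ≤ i := le_trans (le_max_right _ _) hi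
        refine ⟨t i, ht i, ?_⟩
        show (if B ≤ i then t i else yy i) - t i ∈ _
        rw [if_pos hBi, sub_self]
        exact Ideal.zero_mem _
      refine ⟨⟨_, hmem⟩, ?_⟩
      rw [reduceO_apply]
      refine Prod.ext_iff.mpr ⟨funext fun i => ?_, hzh⟩
      show Ideal.Quotient.mk (Ideal.span {π i ^ n}) (if B ≤ i then t i else yy i) = x.1 i
      by_cases hBi : B ≤ i
      · rw [if_pos hBi, ← hyx i hBi]
        refine Ideal.Quotient.eq.mpr ?_
        have hzz : (X : PowerSeries k) ^ n ∣ zh - z i hBi := by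
          rw [← Ideal.mem_span_singleton, ← Ideal.Quotient.eq]
          exact hzh.trans (hz i hBi).symm
        obtain ⟨u, hu⟩ := hzz
        obtain ⟨u', hu'⟩ := Ideal.Quotient.mk_surjective
          (ψ i (Ideal.Quotient.mk (Ideal.span {(X : PowerSeries k) ^ e i}) u))
        have key : Ideal.Quotient.mk (Ideal.span {π i ^ e i}) (t i - y i hBi)
            = Ideal.Quotient.mk (Ideal.span {π i ^ e i}) (π i ^ n * u') := by
          rw [map_sub, ht i, hy i hBi, map_mul, map_pow, hu', ← hψ i, ← map_pow (ψ i),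
            ← map_mul (ψ i),
            ← map_pow (Ideal.Quotient.mk (Ideal.span {(X : PowerSeries k) ^ e i})),
            ← map_mul (Ideal.Quotient.mk (Ideal.span {(X : PowerSeries k) ^ e i})),
            ← hu, map_sub, map_sub]
        have hk := Ideal.Quotient.eq.mp key
        rw [Ideal.mem_span_singleton] at hk ⊢
        have hne : π i ^ n ∣ π i ^ e i := pow_dvd_pow _ (le_trans (le_trans hB hBi) (he i))
        have hd1 : π i ^ n ∣ t i - y i hBi - π i ^ n * u' := dvd_trans hne hk
        have hd2 : π i ^ n ∣ π i ^ n * u' := dvd_mul_right _ _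
        have := dvd_add hd1 hd2
        rwa [sub_add_cancel] at this
      · rw [if_neg hBi]
        exact hyy i
  exact ⟨hker, hrange, ⟨(Ideal.quotEquivOfEq hker.symm).trans
    (RingHom.quotientKerEquivRange _)⟩⟩
end
end

section
/- The element π is a nonzerodivisor in the ring O, and O is π-adically complete and separated: the natural ring homomorphism O → lim_n O/π^n O into the inverse limit of its quotients modulo powers of π is bijective. -/
open PowerSeries

set_option maxHeartbeats 1000000
set_option synthInstance.maxHeartbeats 400000

noncomputable section

variable (k : Type) [Field k]
variable (O : ℕ → Type) [∀ i, CommRing (O i)]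
variable (π : ∀ i, O i) (e : ℕ → ℕ)
variable (ψ : ∀ i, ((PowerSeries k) ⧸ (Ideal.span {(X : PowerSeries k) ^ e i})) ≃+*
    ((O i) ⧸ (Ideal.span {π i ^ e i})))
variable (hψ : ∀ i, ψ i (Ideal.Quotient.mk _ (X : PowerSeries k)) = Ideal.Quotient.mk _ (π i))

lemma mem_smul_top_iff' (R : Type*) [CommRing R] (r : R) (n : ℕ) (x : R) :
    x ∈ (Ideal.span {r}) ^ n • (⊤ : Submodule R R) ↔ x ∈ Ideal.span {r ^ n} := by
  rw [smul_eq_mul, Ideal.mul_top, Ideal.span_singleton_pow]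

include hψ in
/-- If `x ∈ O` and `x = π^n * y` coordinatewise, then `y ∈ O`. -/
lemma closeMem_of_pow_mul [∀ i, IsDomain (O i)]
    (hπ : ∀ i, Irreducible (π i)) (he : ∀ i, i ≤ e i) {n : ℕ}
    {x y : ProdRing k O} (hx : closeMem k O π e ψ x)
    (h1 : ∀ i, x.1 i = π i ^ n * y.1 i) (h2 : x.2 = X ^ n * y.2) :
    closeMem k O π e ψ y := by
  intro m hm
  obtain ⟨B, hB, h⟩ := hx (n + m) (le_trans hm (Nat.le_add_left m n))
  refine ⟨B, le_trans (Nat.le_add_left m n) hB, fun i hi => ?_⟩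
  obtain ⟨z, hz, hz'⟩ := h i hi
  obtain ⟨w, hw⟩ := Ideal.Quotient.mk_surjective
    (ψ i (Ideal.Quotient.mk (Ideal.span {(X : PowerSeries k) ^ e i}) y.2))
  have hnm : n + m ≤ e i := le_trans (le_trans hB hi) (he i)
  refine ⟨w, hw, ?_⟩
  have hzw : Ideal.Quotient.mk (Ideal.span {π i ^ e i}) (π i ^ n * w)
      = Ideal.Quotient.mk (Ideal.span {π i ^ e i}) z := by
    rw [map_mul, map_pow, ← hψ i, hw, ← map_pow (ψ i), ← map_mul (ψ i),
      ← map_pow (Ideal.Quotient.mk (Ideal.span {(X : PowerSeries k) ^ e i})) X n,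
      ← map_mul, ← h2, hz]
  have h3 : z - π i ^ n * w ∈ Ideal.span {π i ^ (n + m)} := by
    refine Ideal.span_singleton_le_span_singleton.mpr (pow_dvd_pow _ hnm) ?_
    exact (Ideal.Quotient.eq).mp hzw.symm
  have h4 : x.1 i - π i ^ n * w ∈ Ideal.span {π i ^ (n + m)} := by
    have := Ideal.add_mem _ hz' h3
    simpa using this
  rw [h1 i] at h4
  have h5 : π i ^ n * y.1 i - π i ^ n * w = π i ^ n * (y.1 i - w) := by ring
  rw [h5, Ideal.mem_span_singleton, pow_add] at h4
  obtain ⟨c, hc⟩ := h4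
  rw [mul_assoc] at hc
  have h6 : y.1 i - w = π i ^ m * c :=
    mul_left_cancel₀ (pow_ne_zero n (hπ i).ne_zero) hc
  rw [Ideal.mem_span_singleton]
  exact ⟨c, h6⟩

lemma coe_piO_pow (n : ℕ) :
    ((piO k O π e ψ hψ ^ n : closeSubring k O π e ψ) : ProdRing k O)
      = ((fun i => π i ^ n), (X : PowerSeries k) ^ n) := rfl

lemma mem_span_piO_pow {n : ℕ} (x : closeSubring k O π e ψ)
    (y : ProdRing k O) (hy : closeMem k O π e ψ y)
    (h1 : ∀ i, (x : ProdRing k O).1 i = π i ^ n * y.1 i)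
    (h2 : (x : ProdRing k O).2 = X ^ n * y.2) :
    x ∈ Ideal.span {piO k O π e ψ hψ ^ n} := by
  rw [Ideal.mem_span_singleton]
  exact ⟨⟨y, hy⟩, Subtype.ext (Prod.ext (funext fun i => h1 i) h2)⟩

lemma of_mem_span_piO_pow {n : ℕ} (x : closeSubring k O π e ψ)
    (hx : x ∈ Ideal.span {piO k O π e ψ hψ ^ n}) :
    ∃ y : closeSubring k O π e ψ,
      (∀ i, (x : ProdRing k O).1 i = π i ^ n * (y : ProdRing k O).1 i)
      ∧ (x : ProdRing k O).2 = X ^ n * (y : ProdRing k O).2 := by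
  rw [Ideal.mem_span_singleton] at hx
  obtain ⟨c, hc⟩ := hx
  have hc2 : (x : ProdRing k O) = ((piO k O π e ψ hψ ^ n : closeSubring k O π e ψ) : ProdRing k O)
      * (c : ProdRing k O) := by exact_mod_cast congrArg Subtype.val hc
  rw [coe_piO_pow] at hc2
  exact ⟨c, fun i => congrFun (congrArg Prod.fst hc2) i, congrArg Prod.snd hc2⟩

theorem statement_1
    (p : ℕ) (hp : p.Prime)
    (k : Type) [Field k] [CharP k p] [ExpChar k p] [PerfectRing k p]
    (O : ℕ → Type) [∀ i, CommRing (O i)] [∀ i, IsDomain (O i)]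
    [∀ i, IsDiscreteValuationRing (O i)] [∀ i, CharZero (O i)]
    (π : ∀ i, O i) (hπ : ∀ i, Irreducible (π i))
    [∀ i, IsAdicComplete (Ideal.span {π i}) (O i)]
    (ρ : ∀ i, ((O i) ⧸ (Ideal.span {π i})) ≃+* k)
    (e : ℕ → ℕ) (he : ∀ i, i ≤ e i)
    (hpe : ∀ i, Ideal.span {((p : O i))} = Ideal.span {π i ^ e i})
    (ψ : ∀ i, ((PowerSeries k) ⧸ (Ideal.span {(X : PowerSeries k) ^ e i})) ≃+*
      ((O i) ⧸ (Ideal.span {π i ^ e i})))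
    (hψ : ∀ i, ψ i (Ideal.Quotient.mk _ (X : PowerSeries k)) = Ideal.Quotient.mk _ (π i)) :
    (piO k O π e ψ hψ) ∈ nonZeroDivisors ↥(closeSubring k O π e ψ)
    ∧ IsAdicComplete (Ideal.span {piO k O π e ψ hψ}) ↥(closeSubring k O π e ψ) := by
  constructor
  · -- π is a nonzerodivisor
    rw [mem_nonZeroDivisors_iff_right]
    intro x hx
    have h0 : (x : ProdRing k O) * ((piO k O π e ψ hψ : closeSubring k O π e ψ) : ProdRing k O)
        = 0 := by exact_mod_cast congrArg Subtype.val hx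
    have h1 : ∀ i, (x : ProdRing k O).1 i * π i = 0 := fun i =>
      congrFun (congrArg Prod.fst h0) i
    have h2 : (x : ProdRing k O).2 * (X : PowerSeries k) = 0 := congrArg Prod.snd h0
    apply Subtype.ext
    refine Prod.ext (funext fun i => ?_) ?_
    · rcases mul_eq_zero.mp (h1 i) with h | h
      · exact h
      · exact absurd h (hπ i).ne_zero
    · rcases mul_eq_zero.mp h2 with h | h
      · exact h
      · exact absurd h PowerSeries.X_ne_zero
  · refine { toIsHausdorff := ?_, toIsPrecomplete := ?_ }
    · -- IsHausdorff
      refine ⟨fun x hx => ?_⟩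
      have key : ∀ n : ℕ, x ∈ Ideal.span {piO k O π e ψ hψ ^ n} := by
        intro n
        have h := hx n
        rwa [SModEq.sub_mem, sub_zero, mem_smul_top_iff'] at h
      apply Subtype.ext
      refine Prod.ext (funext fun i => ?_) ?_
      · refine IsHausdorff.haus
          (inferInstance : IsAdicComplete (Ideal.span {π i}) (O i)).toIsHausdorff
          ((x : ProdRing k O).1 i) fun n => ?_
        rw [SModEq.sub_mem, sub_zero, mem_smul_top_iff', Ideal.mem_span_singleton]
        obtain ⟨y, hy1, hy2⟩ := of_mem_span_piO_pow k O π e ψ hψ x (key n)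
        exact ⟨_, hy1 i⟩
      · refine PowerSeries.ext fun j => ?_
        obtain ⟨y, hy1, hy2⟩ := of_mem_span_piO_pow k O π e ψ hψ x (key (j + 1))
        have h0 : ((0 : closeSubring k O π e ψ) : ProdRing k O).2 = 0 := rfl
        rw [h0, map_zero]
        exact PowerSeries.X_pow_dvd_iff.mp ⟨_, hy2⟩ j (Nat.lt_succ_self j)
    · -- IsPrecomplete
      refine ⟨fun f hf => ?_⟩
      have hdiff : ∀ {m n : ℕ}, m ≤ n → ∃ y : closeSubring k O π e ψ,
          (∀ i, (f m : ProdRing k O).1 i - (f n : ProdRing k O).1 i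
            = π i ^ m * (y : ProdRing k O).1 i)
          ∧ (f m : ProdRing k O).2 - (f n : ProdRing k O).2 = X ^ m * (y : ProdRing k O).2 := by
        intro m n hmn
        have h := hf hmn
        rw [SModEq.sub_mem, mem_smul_top_iff'] at h
        obtain ⟨y, hy1, hy2⟩ := of_mem_span_piO_pow k O π e ψ hψ _ h
        exact ⟨y, fun i => by simpa using hy1 i, by simpa using hy2⟩
      have HL : ∀ i, ∃ Li : O i, ∀ n, (f n : ProdRing k O).1 i ≡ Li
          [SMOD (Ideal.span {π i}) ^ n • (⊤ : Submodule (O i) (O i))] := by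
        intro i
        refine IsPrecomplete.prec
          (inferInstance : IsAdicComplete (Ideal.span {π i}) (O i)).toIsPrecomplete ?_
        intro m n hmn
        rw [SModEq.sub_mem, mem_smul_top_iff', Ideal.mem_span_singleton]
        obtain ⟨y, hy1, hy2⟩ := hdiff hmn
        exact ⟨_, hy1 i⟩
      choose L hL using HL
      set Linf : PowerSeries k :=
        PowerSeries.mk fun j => PowerSeries.coeff j ((f (j + 1) : ProdRing k O).2) with hLinfdef
      have hLinf : ∀ n, ∃ t, (f n : ProdRing k O).2 - Linf = X ^ n * t := by
        intro n
        have hdvd : (X : PowerSeries k) ^ n ∣ (f n : ProdRing k O).2 - Linf := by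
          rw [PowerSeries.X_pow_dvd_iff]
          intro j hj
          rw [map_sub, hLinfdef, PowerSeries.coeff_mk]
          obtain ⟨y, hy1, hy2⟩ := hdiff (show j + 1 ≤ n from hj)
          have hz : PowerSeries.coeff j
              ((f (j + 1) : ProdRing k O).2 - (f n : ProdRing k O).2) = 0 :=
            PowerSeries.X_pow_dvd_iff.mp ⟨_, hy2⟩ j (Nat.lt_succ_self j)
          rw [map_sub] at hz
          rw [sub_eq_zero]
          exact (sub_eq_zero.mp hz).symm
        exact hdvd
      have hLn : ∀ n i, (f n : ProdRing k O).1 i - L i ∈ Ideal.span {π i ^ n} := by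
        intro n i
        have h := hL i n
        rwa [SModEq.sub_mem, mem_smul_top_iff'] at h
      set Lp : ProdRing k O := (L, Linf) with hLpdef
      have hLO : closeMem k O π e ψ Lp := by
        intro n hn
        obtain ⟨B, hB, h⟩ := (f n).property n hn
        refine ⟨B, hB, fun i hi => ?_⟩
        obtain ⟨z, hz, hz'⟩ := h i hi
        obtain ⟨t, ht⟩ := hLinf n
        obtain ⟨w, hw⟩ := Ideal.Quotient.mk_surjective
          (ψ i (Ideal.Quotient.mk (Ideal.span {(X : PowerSeries k) ^ e i}) t))
        refine ⟨z - π i ^ n * w, ?_, ?_⟩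
        · rw [map_sub, hz, map_mul, map_pow, ← hψ i, hw, ← map_pow (ψ i), ← map_mul (ψ i),
            ← map_sub (ψ i),
            ← map_pow (Ideal.Quotient.mk (Ideal.span {(X : PowerSeries k) ^ e i})) X n,
            ← map_mul, ← map_sub, ← ht]
          congr 2
          ring
        · have heq : Lp.1 i - (z - π i ^ n * w)
              = -((f n : ProdRing k O).1 i - Lp.1 i) + ((f n : ProdRing k O).1 i - z)
                + π i ^ n * w := by ring
          rw [heq]
          exact Ideal.add_mem _ (Ideal.add_mem _ (neg_mem (hLn n i)) hz')
            (Ideal.mem_span_singleton.mpr ⟨w, rfl⟩)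
      refine ⟨⟨Lp, hLO⟩, fun n => ?_⟩
      rw [SModEq.sub_mem, mem_smul_top_iff']
      obtain ⟨t, ht⟩ := hLinf n
      choose c hc using fun i =>
        Ideal.mem_span_singleton.mp (hLn n i)
      refine mem_span_piO_pow k O π e ψ hψ _ (c, t) ?_ ?_ ?_
      · refine closeMem_of_pow_mul k O π e ψ hψ hπ he (n := n)
          (x := ((f n) : ProdRing k O) - Lp) ?_ ?_ ?_
        · exact (closeSubring k O π e ψ).sub_mem (f n).property hLO
        · intro i; exact hc i
        · exact ht
      · intro i; simpa using hc i
      · simpa using ht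
end
end

section
/- For every B ≥ 1, the ring homomorphism O → ∏_{1≤i≤B-1} O_i × O_{≥B}, whose components are the coordinate projections O → O_i for 1 ≤ i ≤ B−1 together with the projection O → O_{≥B}, is an isomorphism of rings; consequently, after inverting π, the induced map F → ∏_{1≤i≤B-1} F_i × F_{≥B} is also an isomorphism of rings. -/
open PowerSeries

set_option maxHeartbeats 1000000
set_option synthInstance.maxHeartbeats 400000

noncomputable section

variable (k : Type) [Field k]
variable (O : ℕ → Type) [∀ i, CommRing (O i)]
variable (π : ∀ i, O i) (e : ℕ → ℕ)
variable (ψ : ∀ i, ((PowerSeries k) ⧸ (Ideal.span {(X : PowerSeries k) ^ e i})) ≃+*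
    ((O i) ⧸ (Ideal.span {π i ^ e i})))
variable (hψ : ∀ i, ψ i (Ideal.Quotient.mk _ (X : PowerSeries k)) = Ideal.Quotient.mk _ (π i))

/-- The product `∏_{i < B} O_i`. -/
abbrev ProdLt (B : ℕ) : Type := (i : {i : ℕ // i < B}) → O i.1

/-- The ring homomorphism `O → ∏_{i < B} O_i × O_{≥ B}` given by the coordinate
projections together with the projection onto `O_{≥ B}`. -/
def splitHom (B : ℕ) : closeSubring k O π e ψ →+* (ProdLt O B) × (OgeB k O π e ψ B) :=
  RingHom.prod (Pi.ringHom fun i => projO k O π e ψ i.1) (toOgeB k O π e ψ B)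

/-- The ring homomorphism `O → ∏_{i < B} F_i × F_{≥ B}`. -/
def splitHomF (B : ℕ) :
    closeSubring k O π e ψ →+* ((i : {i : ℕ // i < B}) → FractionRing (O i.1)) ×
      FgeB k O π e ψ hψ B :=
  RingHom.prod
    (Pi.ringHom fun i =>
      (algebraMap (O i.1) (FractionRing (O i.1))).comp (projO k O π e ψ i.1))
    ((algebraMap (OgeB k O π e ψ B) (FgeB k O π e ψ hψ B)).comp (toOgeB k O π e ψ B))

lemma isUnit_pi_of {ι : Type*} {M : ι → Type*} [∀ i, Monoid (M i)] {x : ∀ i, M i}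
    (h : ∀ i, IsUnit (x i)) : IsUnit x :=
  ⟨⟨x, fun i => ↑(h i).unit⁻¹,
    funext fun i => by simp [Pi.mul_apply],
    funext fun i => by simp [Pi.mul_apply]⟩, rfl⟩

lemma isUnit_prod_of {M N : Type*} [Monoid M] [Monoid N] {a : M} {b : N}
    (ha : IsUnit a) (hb : IsUnit b) : IsUnit (a, b) :=
  ⟨⟨(a, b), (↑ha.unit⁻¹, ↑hb.unit⁻¹), by ext <;> simp, by ext <;> simp⟩, rfl⟩

lemma isLocalization_fractionRing_powers {R : Type*} [CommRing R] [IsDomain R]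
    [IsDiscreteValuationRing R] {ϖ : R} (hϖ : Irreducible ϖ) :
    IsLocalization (Submonoid.powers ϖ) (FractionRing R) := by
  constructor
  constructor
  · rintro ⟨y, n, rfl⟩
    have h0 : IsUnit (algebraMap R (FractionRing R) ϖ) :=
      isUnit_iff_ne_zero.mpr fun h0 => hϖ.ne_zero
        ((IsFractionRing.to_map_eq_zero_iff (K := FractionRing R)).mp h0)
    simpa [map_pow] using h0.pow n
  · intro z
    obtain ⟨⟨a, s⟩, h⟩ := IsLocalization.surj (nonZeroDivisors R) z
    obtain ⟨n, u, hu⟩ := IsDiscreteValuationRing.eq_unit_mul_pow_irreducible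
      (nonZeroDivisors.coe_ne_zero s) hϖ
    refine ⟨⟨a * ↑u⁻¹, ⟨ϖ ^ n, n, rfl⟩⟩, ?_⟩
    have hs : (↑u⁻¹ : R) * (s : R) = ϖ ^ n := by
      rw [hu]; exact u.inv_mul_cancel_left _
    simp only [map_mul]
    rw [← hs, map_mul, ← mul_assoc, mul_comm z, mul_assoc, h, mul_comm]
  · intro x y h
    exact ⟨1, by rw [IsFractionRing.injective R (FractionRing R) h]⟩

theorem statement_2
    (p : ℕ) (hp : p.Prime)
    (k : Type) [Field k] [CharP k p] [ExpChar k p] [PerfectRing k p]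
    (O : ℕ → Type) [∀ i, CommRing (O i)] [∀ i, IsDomain (O i)]
    [∀ i, IsDiscreteValuationRing (O i)] [∀ i, CharZero (O i)]
    (π : ∀ i, O i) (hπ : ∀ i, Irreducible (π i))
    [∀ i, IsAdicComplete (Ideal.span {π i}) (O i)]
    (ρ : ∀ i, ((O i) ⧸ (Ideal.span {π i})) ≃+* k)
    (e : ℕ → ℕ) (he : ∀ i, i ≤ e i)
    (hpe : ∀ i, Ideal.span {((p : O i))} = Ideal.span {π i ^ e i})
    (ψ : ∀ i, ((PowerSeries k) ⧸ (Ideal.span {(X : PowerSeries k) ^ e i})) ≃+*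
      ((O i) ⧸ (Ideal.span {π i ^ e i})))
    (hψ : ∀ i, ψ i (Ideal.Quotient.mk _ (X : PowerSeries k)) = Ideal.Quotient.mk _ (π i))
    (B : ℕ) (hB : 1 ≤ B) :
    Function.Bijective (splitHom k O π e ψ B)
    ∧ ∃ g : Fring k O π e ψ hψ →+*
        ((i : {i : ℕ // i < B}) → FractionRing (O i.1)) × FgeB k O π e ψ hψ B,
        g.comp (algebraMap ↥(closeSubring k O π e ψ) (Fring k O π e ψ hψ))
          = splitHomF k O π e ψ hψ B
        ∧ Function.Bijective g := by
  classical
  -- Part 1: injectivity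
  have hinj : Function.Injective (splitHom k O π e ψ B) := by
    intro x y hxy
    have h1 : ∀ i : {i : ℕ // i < B}, x.1.1 i.1 = y.1.1 i.1 :=
      fun i => congrFun (congrArg Prod.fst hxy) i
    have h2 : toGe k O π e ψ B x = toGe k O π e ψ B y :=
      congrArg Subtype.val (congrArg Prod.snd hxy)
    refine Subtype.ext (Prod.ext (funext fun i => ?_) (congrArg (fun t : ProdRingGe k O B => t.2) h2))
    by_cases h : i < B
    · exact h1 ⟨i, h⟩
    · exact congrFun (congrArg Prod.fst h2) ⟨i, not_lt.mp h⟩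
  -- Part 1: surjectivity
  have hsurj : Function.Surjective (splitHom k O π e ψ B) := by
    rintro ⟨a, v, hv⟩
    obtain ⟨y, rfl⟩ := RingHom.mem_range.mp hv
    refine ⟨⟨(fun i => if h : i < B then a ⟨i, h⟩ else y.1.1 i, y.1.2), ?_⟩, ?_⟩
    · intro n hn
      obtain ⟨B1, hB1, h1⟩ := y.2 n hn
      refine ⟨max B1 B, hB1.trans (le_max_left _ _), fun i hi => ?_⟩
      obtain ⟨w, hw, hw'⟩ := h1 i ((le_max_left _ _).trans hi)
      refine ⟨w, hw, ?_⟩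
      have hni : ¬ i < B := not_lt.mpr ((le_max_right _ _).trans hi)
      simpa only [dif_neg hni] using hw'
    · refine Prod.ext (funext fun i => ?_) (Subtype.ext (Prod.ext (funext fun i => ?_) rfl))
      · exact dif_pos i.2
      · exact dif_neg (not_lt.mpr i.2)
  -- Part 2
  haveI : Fintype {i : ℕ // i < B} := Fintype.ofEquiv (Fin B) (Fin.equivSubtype)
  haveI hloc : ∀ i : {i : ℕ // i < B},
      IsLocalization (Submonoid.powers (π i.1)) (FractionRing (O i.1)) :=
    fun i => isLocalization_fractionRing_powers (hπ i.1)
  set R' := (ProdLt O B) × (OgeB k O π e ψ B) with hR'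
  set T := ((i : {i : ℕ // i < B}) → FractionRing (O i.1)) × FgeB k O π e ψ hψ B with hT
  let f : R' →+* T := RingHom.prodMap
    (Pi.ringHom fun i => (algebraMap (O i.1) (FractionRing (O i.1))).comp
      (Pi.evalRingHom (fun j : {j : ℕ // j < B} => O j.1) i))
    (algebraMap (OgeB k O π e ψ B) (FgeB k O π e ψ hψ B))
  letI : Algebra R' T := f.toAlgebra
  have halg : algebraMap R' T = f := rfl
  set s : R' := splitHom k O π e ψ B (piO k O π e ψ hψ) with hs
  have hs1 : ∀ i : {i : ℕ // i < B}, s.1 i = π i.1 := fun i => rfl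
  have hs2 : s.2 = piGe k O π e ψ hψ B := rfl
  haveI hlocT : IsLocalization (Submonoid.powers s) T := by
    constructor
    constructor
    · rintro ⟨y, n, rfl⟩
      rw [halg, map_pow]
      refine IsUnit.pow n ?_
      refine isUnit_prod_of (isUnit_pi_of fun i => ?_) ?_
      · exact IsLocalization.map_units (FractionRing (O i.1))
          (⟨π i.1, Submonoid.mem_powers _⟩ : Submonoid.powers (π i.1))
      · exact IsLocalization.map_units (FgeB k O π e ψ hψ B)
          (⟨piGe k O π e ψ hψ B, Submonoid.mem_powers _⟩ :
            Submonoid.powers (piGe k O π e ψ hψ B))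
    · intro z
      have hz1 : ∀ i : {i : ℕ // i < B}, ∃ x : O i.1 × ℕ,
          z.1 i * algebraMap (O i.1) (FractionRing (O i.1)) (π i.1 ^ x.2)
            = algebraMap (O i.1) (FractionRing (O i.1)) x.1 := by
        intro i
        obtain ⟨⟨x, c⟩, hx⟩ := IsLocalization.surj (Submonoid.powers (π i.1)) (z.1 i)
        obtain ⟨m, hm⟩ := c.2
        have hm' : π i.1 ^ m = ↑c := hm
        exact ⟨⟨x, m⟩, by rw [hm']; exact hx⟩
      choose w hw using hz1
      obtain ⟨⟨xI, cI⟩, hxI⟩ := IsLocalization.surj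
        (Submonoid.powers (piGe k O π e ψ hψ B)) z.2
      obtain ⟨mI, hmI'⟩ := cI.2
      have hmI : piGe k O π e ψ hψ B ^ mI = ↑cI := hmI'
      set N : ℕ := max (Finset.univ.sup fun i : {i : ℕ // i < B} => (w i).2) mI with hN
      have hNi : ∀ i : {i : ℕ // i < B}, (w i).2 ≤ N := fun i =>
        le_trans (Finset.le_sup (f := fun j : {j : ℕ // j < B} => (w j).2)
          (Finset.mem_univ i)) (le_max_left _ _)
      refine ⟨⟨((fun i => (w i).1 * π i.1 ^ (N - (w i).2)),
        xI * piGe k O π e ψ hψ B ^ (N - mI)), ⟨s ^ N, N, rfl⟩⟩, ?_⟩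
      rw [halg]
      refine Prod.ext (funext fun i => ?_) ?_
      · show z.1 i * algebraMap (O i.1) (FractionRing (O i.1)) ((s ^ N).1 i)
          = algebraMap (O i.1) (FractionRing (O i.1)) ((w i).1 * π i.1 ^ (N - (w i).2))
        have : (s ^ N).1 i = π i.1 ^ (w i).2 * π i.1 ^ (N - (w i).2) := by
          rw [← pow_add, Nat.add_sub_cancel' (hNi i)]
          rfl
        rw [this, map_mul, ← mul_assoc, hw i, ← map_mul]
      · show z.2 * algebraMap _ (FgeB k O π e ψ hψ B) ((s ^ N).2)
          = algebraMap _ (FgeB k O π e ψ hψ B) (xI * piGe k O π e ψ hψ B ^ (N - mI))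
        have : (s ^ N).2 = piGe k O π e ψ hψ B ^ mI * piGe k O π e ψ hψ B ^ (N - mI) := by
          rw [← pow_add, Nat.add_sub_cancel' (le_max_right _ _)]
          rfl
        rw [this, map_mul, ← mul_assoc]
        have hxI' : z.2 * algebraMap (OgeB k O π e ψ B) (FgeB k O π e ψ hψ B) (↑cI)
            = algebraMap (OgeB k O π e ψ B) (FgeB k O π e ψ hψ B) xI := hxI
        rw [← hmI] at hxI'
        rw [hxI', ← map_mul]
    · intro x y h
      rw [halg] at h
      have h1 : ∀ i : {i : ℕ // i < B}, x.1 i = y.1 i := fun i =>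
        IsFractionRing.injective (O i.1) (FractionRing (O i.1))
          (congrFun (congrArg Prod.fst h) i)
      have h2 : algebraMap (OgeB k O π e ψ B) (FgeB k O π e ψ hψ B) x.2
          = algebraMap (OgeB k O π e ψ B) (FgeB k O π e ψ hψ B) y.2 :=
        congrArg Prod.snd h
      obtain ⟨c, hc⟩ := IsLocalization.exists_of_eq
        (M := Submonoid.powers (piGe k O π e ψ hψ B)) h2
      obtain ⟨m, hm'⟩ := c.2
      have hm : piGe k O π e ψ hψ B ^ m = ↑c := hm'
      refine ⟨⟨s ^ m, m, rfl⟩, ?_⟩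
      refine Prod.ext (funext fun i => ?_) ?_
      · show (s ^ m).1 i * x.1 i = (s ^ m).1 i * y.1 i
        rw [h1 i]
      · show (s ^ m).2 * x.2 = (s ^ m).2 * y.2
        have : (s ^ m).2 = piGe k O π e ψ hψ B ^ m := rfl
        rw [this, hm]
        exact hc
  let φ : (closeSubring k O π e ψ) ≃+* R' :=
    RingEquiv.ofBijective (splitHom k O π e ψ B) ⟨hinj, hsurj⟩
  have hφπ : Submonoid.map φ.toMonoidHom
      (Submonoid.powers (piO k O π e ψ hψ)) = Submonoid.powers s := by
    rw [Submonoid.map_powers]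
    rfl
  let g := IsLocalization.ringEquivOfRingEquiv
    (M := Submonoid.powers (piO k O π e ψ hψ)) (T := Submonoid.powers s)
    (Fring k O π e ψ hψ) T φ hφπ
  refine ⟨⟨hinj, hsurj⟩, g.toRingHom, ?_, g.bijective⟩
  refine RingHom.ext fun x => ?_
  have := IsLocalization.ringEquivOfRingEquiv_eq (S := Fring k O π e ψ hψ) (Q := T) hφπ x
  exact this
end
end

section
/- For every j ∈ ℕ ∪ {∞}, the coordinate projection O → O_j is a surjective ring homomorphism; consequently the induced ring homomorphism F → F_j (obtained by inverting π, which maps to the uniformizer π_j) is also surjective. -/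
open PowerSeries

set_option maxHeartbeats 1000000
set_option synthInstance.maxHeartbeats 400000

noncomputable section

variable (k : Type) [Field k]
variable (O : ℕ → Type) [∀ i, CommRing (O i)]
variable (π : ∀ i, O i) (e : ℕ → ℕ)
variable (ψ : ∀ i, ((PowerSeries k) ⧸ (Ideal.span {(X : PowerSeries k) ^ e i})) ≃+*
    ((O i) ⧸ (Ideal.span {π i ^ e i})))
variable (hψ : ∀ i, ψ i (Ideal.Quotient.mk _ (X : PowerSeries k)) = Ideal.Quotient.mk _ (π i))

variable [∀ i, IsDomain (O i)] (hπ : ∀ i, Irreducible (π i))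

/-- The induced map `F → F_j` for `j ∈ ℕ`, where `F_j = Frac(O_j)`. -/
def locProj (j : ℕ) : Fring k O π e ψ hψ →+* FractionRing (O j) :=
  Localization.awayLift
    ((algebraMap (O j) (FractionRing (O j))).comp (projO k O π e ψ j))
    (piO k O π e ψ hψ)
    (IsLocalization.map_units (M := nonZeroDivisors (O j)) _
      ⟨π j, mem_nonZeroDivisors_of_ne_zero (hπ j).ne_zero⟩)

/-- The induced map `F → F_∞`, where `F_∞ = Frac(k[[π_∞]]) = k((π_∞))`. -/
def locProjInf : Fring k O π e ψ hψ →+* FractionRing (PowerSeries k) :=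
  Localization.awayLift
    ((algebraMap (PowerSeries k) (FractionRing (PowerSeries k))).comp (projInf k O π e ψ))
    (piO k O π e ψ hψ)
    (IsLocalization.map_units (M := nonZeroDivisors (PowerSeries k)) _
      ⟨(X : PowerSeries k), mem_nonZeroDivisors_of_ne_zero PowerSeries.X_ne_zero⟩)


lemma awayLift_surjective {R A : Type} [CommRing R] [CommRing A] [IsDomain A]
    [IsDiscreteValuationRing A] (f : R →+* A) (hf : Function.Surjective f) (r : R)
    (hr : Irreducible (f r))
    (hu : IsUnit (((algebraMap A (FractionRing A)).comp f) r)) :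
    Function.Surjective (Localization.awayLift ((algebraMap A (FractionRing A)).comp f) r hu) := by
  set g := algebraMap A (FractionRing A) with hg
  set L := Localization.awayLift (g.comp f) r hu with hL
  have hginj : Function.Injective g := IsFractionRing.injective A (FractionRing A)
  have ht : g (f r) ≠ 0 := fun h => hr.ne_zero (hginj (by rw [h, map_zero]))
  intro z
  obtain ⟨⟨a, b⟩, hz⟩ := IsLocalization.mk'_surjective (nonZeroDivisors A) z
  have hb0 : (b : A) ≠ 0 := nonZeroDivisors.ne_zero b.2
  obtain ⟨m, u, hbu⟩ := IsDiscreteValuationRing.eq_unit_mul_pow_irreducible hb0 hr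
  obtain ⟨x, hx⟩ := hf (a * ↑u⁻¹)
  refine ⟨IsLocalization.mk' (Localization.Away r) x
    (⟨r ^ m, m, rfl⟩ : Submonoid.powers r), ?_⟩
  have key : L (IsLocalization.mk' (Localization.Away r) x
      (⟨r ^ m, m, rfl⟩ : Submonoid.powers r)) * g (f r) ^ m = g (f x) := by
    have h2 := congrArg L (IsLocalization.mk'_spec (Localization.Away r) x
      (⟨r ^ m, m, rfl⟩ : Submonoid.powers r))
    rw [map_mul] at h2
    rw [hL] at h2 ⊢
    rw [IsLocalization.Away.lift_eq, IsLocalization.Away.lift_eq] at h2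
    simpa [map_pow] using h2
  have hz2 : z * g (f r) ^ m = g (f x) := by
    have hspec2 : z * g ↑b = g a := by
      rw [← hz]; exact IsLocalization.mk'_spec (FractionRing A) a b
    rw [hbu, map_mul, map_pow] at hspec2
    have hu1 : g ↑u * g ↑u⁻¹ = 1 := by rw [← map_mul, Units.mul_inv, map_one]
    have h3 : z * g (f r) ^ m * (g ↑u * g ↑u⁻¹) = g a * g ↑u⁻¹ := by
      rw [← hspec2]; ring
    rw [hu1, mul_one] at h3
    rw [h3, hx, map_mul]
  exact mul_right_cancel₀ (pow_ne_zero m ht) (key.trans hz2.symm)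

theorem statement_4
    (p : ℕ) (hp : p.Prime)
    (k : Type) [Field k] [CharP k p] [ExpChar k p] [PerfectRing k p]
    (O : ℕ → Type) [∀ i, CommRing (O i)] [∀ i, IsDomain (O i)]
    [∀ i, IsDiscreteValuationRing (O i)] [∀ i, CharZero (O i)]
    (π : ∀ i, O i) (hπ : ∀ i, Irreducible (π i))
    [∀ i, IsAdicComplete (Ideal.span {π i}) (O i)]
    (ρ : ∀ i, ((O i) ⧸ (Ideal.span {π i})) ≃+* k)
    (e : ℕ → ℕ) (he : ∀ i, i ≤ e i)
    (hpe : ∀ i, Ideal.span {((p : O i))} = Ideal.span {π i ^ e i})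
    (ψ : ∀ i, ((PowerSeries k) ⧸ (Ideal.span {(X : PowerSeries k) ^ e i})) ≃+*
      ((O i) ⧸ (Ideal.span {π i ^ e i})))
    (hψ : ∀ i, ψ i (Ideal.Quotient.mk _ (X : PowerSeries k)) = Ideal.Quotient.mk _ (π i)) :
    (∀ j : ℕ, Function.Surjective (projO k O π e ψ j))
    ∧ Function.Surjective (projInf k O π e ψ)
    ∧ (∀ j : ℕ, Function.Surjective (locProj k O π e ψ hψ hπ j))
    ∧ Function.Surjective (locProjInf k O π e ψ hψ) := by
  have h1 : ∀ j : ℕ, Function.Surjective (projO k O π e ψ j) := by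
    intro j y
    refine ⟨⟨(Function.update (fun i => (0 : O i)) j y, 0), ?_⟩, ?_⟩
    · intro n hn
      refine ⟨max n (j + 1), le_max_left _ _, fun i hi => ⟨0, by simp, ?_⟩⟩
      have hij : i ≠ j := by omega
      simpa [Function.update_of_ne hij] using Ideal.zero_mem _
    · simp [projO]
  have h2 : Function.Surjective (projInf k O π e ψ) := by
    intro f
    choose lf hlf using fun i => Ideal.Quotient.mk_surjective
      (I := Ideal.span {π i ^ e i}) (ψ i (Ideal.Quotient.mk _ f))
    refine ⟨⟨(lf, f), ?_⟩, rfl⟩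
    intro n hn
    exact ⟨n, le_rfl, fun i hi => ⟨lf i, hlf i, by simpa using Ideal.zero_mem _⟩⟩
  refine ⟨h1, h2, fun j => ?_, ?_⟩
  · unfold locProj
    exact awayLift_surjective (projO k O π e ψ j) (h1 j) (piO k O π e ψ hψ) (hπ j) _
  · unfold locProjInf
    exact awayLift_surjective (projInf k O π e ψ) h2 (piO k O π e ψ hψ)
      PowerSeries.X_irreducible _
end
end

section
/- Let a ∈ F and let n ∈ ℤ. For j ∈ ℕ ∪ {∞}, write a_j ∈ F_j for the image of a under the natural map F → F_j. If a_∞ ∈ π_∞^n O_∞ \ π_∞^{n+1} O_∞, then there exists an integer B ≥ 1 such that the image of a in F_{≥B} lies in π^n O_{≥B}, and for every i ≥ B one has a_i ∈ π_i^n O_i \ π_i^{n+1} O_i. -/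
open PowerSeries

set_option maxHeartbeats 1000000
set_option synthInstance.maxHeartbeats 400000

noncomputable section

variable (k : Type) [Field k]
variable (O : ℕ → Type) [∀ i, CommRing (O i)]
variable (π : ∀ i, O i) (e : ℕ → ℕ)
variable (ψ : ∀ i, ((PowerSeries k) ⧸ (Ideal.span {(X : PowerSeries k) ^ e i})) ≃+*
    ((O i) ⧸ (Ideal.span {π i ^ e i})))
variable (hψ : ∀ i, ψ i (Ideal.Quotient.mk _ (X : PowerSeries k)) = Ideal.Quotient.mk _ (π i))

variable [∀ i, IsDomain (O i)] (hπ : ∀ i, Irreducible (π i))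

/-- The image of `π` in `F_{≥ B}` is a unit. -/
def piGeUnit (B : ℕ) : (FgeB k O π e ψ hψ B)ˣ :=
  (IsLocalization.map_units (M := Submonoid.powers (piGe k O π e ψ hψ B))
    (FgeB k O π e ψ hψ B) ⟨piGe k O π e ψ hψ B, Submonoid.mem_powers _⟩).unit


lemma my_isUnit_of_not_dvd {R : Type*} [CommRing R] [IsDomain R] [IsDiscreteValuationRing R]
    {π y : R} (hπ : Irreducible π) (h : ¬ π ∣ y) : IsUnit y := by
  have hy : y ≠ 0 := by rintro rfl; exact h (dvd_zero _)
  obtain ⟨k, u, rfl⟩ := IsDiscreteValuationRing.eq_unit_mul_pow_irreducible hy hπ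
  cases k with
  | zero => simpa using u.isUnit
  | succ k => exact absurd (Dvd.intro (↑u * π ^ k) (by ring)) h

lemma my_isUnit_of_quot_unit {R : Type*} [CommRing R] [IsDomain R] [IsDiscreteValuationRing R]
    {π : R} (hπ : Irreducible π) {M : ℕ} (hM : 1 ≤ M) {y : R}
    (h : IsUnit (Ideal.Quotient.mk (Ideal.span {π ^ M}) y)) : IsUnit y := by
  apply my_isUnit_of_not_dvd hπ
  rintro ⟨t, rfl⟩
  obtain ⟨v, hv⟩ := isUnit_iff_exists_inv.mp h
  obtain ⟨z, rfl⟩ := Ideal.Quotient.mk_surjective v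
  rw [← map_mul, ← map_one (Ideal.Quotient.mk (Ideal.span {π ^ M})),
    Ideal.Quotient.eq, Ideal.mem_span_singleton] at hv
  have h1 : π ∣ π * t * z - 1 := (dvd_pow_self π (by omega)).trans hv
  have h2 : π ∣ π * t * z := ⟨t * z, by ring⟩
  have h3 : π ∣ 1 := by
    have := dvd_sub h2 h1
    simpa using this
  exact hπ.not_isUnit (isUnit_of_dvd_one h3)

theorem statement_5
    (p : ℕ) (hp : p.Prime)
    (k : Type) [Field k] [CharP k p] [ExpChar k p] [PerfectRing k p]
    (O : ℕ → Type) [∀ i, CommRing (O i)] [∀ i, IsDomain (O i)]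
    [∀ i, IsDiscreteValuationRing (O i)] [∀ i, CharZero (O i)]
    (π : ∀ i, O i) (hπ : ∀ i, Irreducible (π i))
    [∀ i, IsAdicComplete (Ideal.span {π i}) (O i)]
    (ρ : ∀ i, ((O i) ⧸ (Ideal.span {π i})) ≃+* k)
    (e : ℕ → ℕ) (he : ∀ i, i ≤ e i)
    (hpe : ∀ i, Ideal.span {((p : O i))} = Ideal.span {π i ^ e i})
    (ψ : ∀ i, ((PowerSeries k) ⧸ (Ideal.span {(X : PowerSeries k) ^ e i})) ≃+*
      ((O i) ⧸ (Ideal.span {π i ^ e i})))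
    (hψ : ∀ i, ψ i (Ideal.Quotient.mk _ (X : PowerSeries k)) = Ideal.Quotient.mk _ (π i))
    (a : Fring k O π e ψ hψ) (n : ℤ)
    (h1 : ∃ b : PowerSeries k, locProjInf k O π e ψ hψ a
        = (algebraMap (PowerSeries k) (FractionRing (PowerSeries k)) (X : PowerSeries k)) ^ n
          * algebraMap (PowerSeries k) (FractionRing (PowerSeries k)) b)
    (h2 : ¬ ∃ b : PowerSeries k, locProjInf k O π e ψ hψ a
        = (algebraMap (PowerSeries k) (FractionRing (PowerSeries k)) (X : PowerSeries k)) ^ (n + 1)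
          * algebraMap (PowerSeries k) (FractionRing (PowerSeries k)) b) :
    ∃ B, 1 ≤ B
      ∧ (∃ c : OgeB k O π e ψ B, projFge k O π e ψ hψ B a
          = (((piGeUnit k O π e ψ hψ B) ^ n : (FgeB k O π e ψ hψ B)ˣ) : FgeB k O π e ψ hψ B)
            * algebraMap (OgeB k O π e ψ B) (FgeB k O π e ψ hψ B) c)
      ∧ ∀ i, B ≤ i →
          (∃ b : O i, locProj k O π e ψ hψ hπ i a
              = (algebraMap (O i) (FractionRing (O i)) (π i)) ^ n
                * algebraMap (O i) (FractionRing (O i)) b)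
          ∧ ¬ (∃ b : O i, locProj k O π e ψ hψ hπ i a
              = (algebraMap (O i) (FractionRing (O i)) (π i)) ^ (n + 1)
                * algebraMap (O i) (FractionRing (O i)) b) := by
  classical
  obtain ⟨⟨x, s⟩, hxs⟩ := IsLocalization.surj (Submonoid.powers (piO k O π e ψ hψ)) a
  obtain ⟨m, hm⟩ := s.2
  -- infinite place
  set K := FractionRing (PowerSeries k)
  set φ := algebraMap (PowerSeries k) K with hφ
  have hlift : ∀ z : closeSubring k O π e ψ,
      locProjInf k O π e ψ hψ (algebraMap _ _ z) = φ z.1.2 := fun z =>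
    IsLocalization.Away.lift_eq (piO k O π e ψ hψ)
      (IsLocalization.map_units (M := nonZeroDivisors (PowerSeries k)) _
        ⟨(X : PowerSeries k), mem_nonZeroDivisors_of_ne_zero PowerSeries.X_ne_zero⟩) z
  have hXne : φ (X : PowerSeries k) ≠ 0 := fun h =>
    PowerSeries.X_ne_zero (IsFractionRing.injective _ _ (h.trans (map_zero φ).symm))
  set xinf := x.1.2 with hxinfdef
  have hxinfty : locProjInf k O π e ψ hψ a * φ (X : PowerSeries k) ^ m = φ xinf := by
    have h0 := congrArg (locProjInf k O π e ψ hψ) hxs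
    rw [map_mul, ← hm, hlift, hlift] at h0
    have : ((piO k O π e ψ hψ) ^ m).1.2 = (X : PowerSeries k) ^ m := by
      rw [show ((piO k O π e ψ hψ) ^ m).1.2 = projInf k O π e ψ ((piO k O π e ψ hψ) ^ m) from rfl,
        map_pow]
      rfl
    rw [this, map_pow] at h0
    exact h0
  obtain ⟨b1, hb1⟩ := h1
  have key : φ xinf = φ (X : PowerSeries k) ^ (n + (m : ℤ)) * φ b1 := by
    rw [← hxinfty, hb1]
    rw [← zpow_natCast (φ (X : PowerSeries k)) m, mul_right_comm, ← zpow_add₀ hXne]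
  have hNnn : 0 ≤ n + (m : ℤ) := by
    by_contra hneg
    push_neg at hneg
    set t : ℕ := (-(n + (m : ℤ)) - 1).toNat with htdef
    have ht : (t : ℤ) = -(n + (m : ℤ)) - 1 := Int.toNat_of_nonneg (by omega)
    apply h2
    refine ⟨xinf * (X : PowerSeries k) ^ t, ?_⟩
    apply mul_right_cancel₀ (pow_ne_zero m hXne)
    rw [hxinfty]
    rw [map_mul, map_pow, ← zpow_natCast (φ (X : PowerSeries k)) m,
      ← zpow_natCast (φ (X : PowerSeries k)) t]
    rw [show φ (X : PowerSeries k) ^ (n + 1) * (φ xinf * φ (X : PowerSeries k) ^ (t : ℤ))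
          * φ (X : PowerSeries k) ^ (m : ℤ)
        = φ xinf * φ (X : PowerSeries k) ^ ((n + 1) + (t : ℤ) + (m : ℤ)) from by
      simp only [zpow_add₀ hXne]; ring]
    rw [show (n + 1) + (t : ℤ) + (m : ℤ) = 0 from by omega, zpow_zero, mul_one]
  set N : ℕ := (n + (m : ℤ)).toNat with hNdef
  have hN : (N : ℤ) = n + (m : ℤ) := Int.toNat_of_nonneg hNnn
  have hxinf_eq : xinf = (X : PowerSeries k) ^ N * b1 := by
    apply IsFractionRing.injective (PowerSeries k) K
    rw [map_mul, map_pow, key, ← hN, zpow_natCast]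
  have hndvd : ¬ (X : PowerSeries k) ∣ b1 := by
    rintro ⟨b2, rfl⟩
    apply h2
    refine ⟨b2, ?_⟩
    apply mul_right_cancel₀ (pow_ne_zero m hXne)
    rw [hxinfty, hxinf_eq]
    calc φ ((X : PowerSeries k) ^ N * ((X : PowerSeries k) * b2))
        = φ b2 * φ (X : PowerSeries k) ^ ((N : ℤ) + 1) := by
          rw [map_mul, map_mul, map_pow, zpow_add₀ hXne, zpow_natCast, zpow_one]; ring
      _ = φ (X : PowerSeries k) ^ (n + 1) * φ b2 * φ (X : PowerSeries k) ^ (m : ℤ) := by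
          rw [show (N : ℤ) + 1 = (n + 1) + (m : ℤ) from by omega, zpow_add₀ hXne]; ring
      _ = φ (X : PowerSeries k) ^ (n + 1) * φ b2 * φ (X : PowerSeries k) ^ m := by
          rw [zpow_natCast]
  have hu : IsUnit b1 := by
    rw [PowerSeries.isUnit_iff_constantCoeff]
    rw [isUnit_iff_ne_zero]
    exact fun h0 => hndvd (PowerSeries.X_dvd_iff.mpr h0)
  -- the close-field structure of x
  have hxmem : closeMem k O π e ψ (x : ProdRing k O) := x.2
  obtain ⟨B0, hB0, hB0'⟩ := hxmem (N + 1) (by omega)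
  -- a common sub-derivation
  have hmk : ∀ i (yu : O i), Ideal.Quotient.mk (Ideal.span {π i ^ e i}) yu
      = ψ i (Ideal.Quotient.mk (Ideal.span {(X : PowerSeries k) ^ e i}) b1) →
      Ideal.Quotient.mk (Ideal.span {π i ^ e i}) (π i ^ N * yu)
        = ψ i (Ideal.Quotient.mk (Ideal.span {(X : PowerSeries k) ^ e i}) xinf) := by
    intro i yu hyu
    rw [hxinf_eq, map_mul, map_pow, map_mul, map_pow, map_mul, map_pow, hψ i, hyu]
  have hπN : ∀ i, (π i : O i) ^ N ≠ 0 := fun i => pow_ne_zero N (hπ i).ne_zero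
  have key2 : ∀ i, B0 ≤ i → ∃ z, x.1.1 i = π i ^ N * z ∧ IsUnit z := by
    intro i hi
    obtain ⟨y, hy, hy'⟩ := hB0' i hi
    obtain ⟨yu, hyu⟩ := Ideal.Quotient.mk_surjective
      (ψ i (Ideal.Quotient.mk (Ideal.span {(X : PowerSeries k) ^ e i}) b1))
    have heiN : N + 1 ≤ e i := le_trans (le_trans hB0 hi) (he i)
    have hyu_unit : IsUnit yu := by
      apply my_isUnit_of_quot_unit (hπ i) (M := e i) (by omega)
      rw [hyu]
      exact (hu.map (Ideal.Quotient.mk (Ideal.span {(X : PowerSeries k) ^ e i}))).map (ψ i)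
    have d1 : (π i) ^ (N + 1) ∣ x.1.1 i - y := Ideal.mem_span_singleton.mp hy'
    have d2 : (π i) ^ (e i) ∣ y - π i ^ N * yu := Ideal.mem_span_singleton.mp
      (Ideal.Quotient.eq.mp (hy.trans (hmk i yu hyu).symm))
    have d2' : (π i) ^ (N + 1) ∣ y - π i ^ N * yu := (pow_dvd_pow _ heiN).trans d2
    have hdiff : (π i) ^ (N + 1) ∣ x.1.1 i - π i ^ N * yu := by
      have := dvd_add d1 d2'
      simpa using this
    obtain ⟨t, ht⟩ := hdiff
    refine ⟨yu + π i * t, by rw [pow_succ] at ht; linear_combination ht, ?_⟩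
    apply my_isUnit_of_not_dvd (hπ i)
    rintro ⟨c, hc⟩
    have : π i ∣ yu := ⟨c - t, by linear_combination hc⟩
    exact (hπ i).not_isUnit (isUnit_of_dvd_unit this hyu_unit)
  set wfun : ∀ i, O i := fun i =>
    if h : ∃ z, x.1.1 i = π i ^ N * z then h.choose else 0 with hwfun
  have hw : ∀ i, B0 ≤ i → x.1.1 i = π i ^ N * wfun i := by
    intro i hi
    obtain ⟨z, hz, _⟩ := key2 i hi
    rw [hwfun]
    simp only [dif_pos (⟨z, hz⟩ : ∃ z, x.1.1 i = π i ^ N * z)]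
    exact (⟨z, hz⟩ : ∃ z, x.1.1 i = π i ^ N * z).choose_spec
  have hwu : ∀ i, B0 ≤ i → IsUnit (wfun i) := by
    intro i hi
    obtain ⟨z, hz, hzu⟩ := key2 i hi
    have heq : wfun i = z :=
      mul_left_cancel₀ (hπN i) ((hw i hi).symm.trans hz)
    rw [heq]; exact hzu
  have hwmem : closeMem k O π e ψ ((wfun, b1) : ProdRing k O) := by
    intro n' hn'
    obtain ⟨B1, hB1, hB1'⟩ := hxmem (n' + N) (by omega)
    refine ⟨max B0 B1, le_trans (le_trans (by omega : n' ≤ n' + N) hB1) (le_max_right _ _), ?_⟩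
    intro i hi
    have hiB0 : B0 ≤ i := le_trans (le_max_left _ _) hi
    have hiB1 : B1 ≤ i := le_trans (le_max_right _ _) hi
    obtain ⟨y1, hy1, hy1'⟩ := hB1' i hiB1
    obtain ⟨yu, hyu⟩ := Ideal.Quotient.mk_surjective
      (ψ i (Ideal.Quotient.mk (Ideal.span {(X : PowerSeries k) ^ e i}) b1))
    refine ⟨yu, hyu, ?_⟩
    have d1 : (π i) ^ (n' + N) ∣ x.1.1 i - y1 := Ideal.mem_span_singleton.mp hy1'
    have d2 : (π i) ^ (e i) ∣ y1 - π i ^ N * yu := Ideal.mem_span_singleton.mp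
      (Ideal.Quotient.eq.mp (hy1.trans (hmk i yu hyu).symm))
    have hein : n' + N ≤ e i := le_trans (le_trans hB1 hiB1) (he i)
    have d2' : (π i) ^ (n' + N) ∣ y1 - π i ^ N * yu := (pow_dvd_pow _ hein).trans d2
    have hdiff : (π i) ^ (n' + N) ∣ x.1.1 i - π i ^ N * yu := by
      have := dvd_add d1 d2'
      simpa using this
    rw [hw i hiB0] at hdiff
    have hdiff2 : π i ^ N * π i ^ n' ∣ π i ^ N * (wfun i - yu) := by
      rw [← pow_add]
      rw [mul_sub]
      rw [add_comm N n']
      exact hdiff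
    rw [Ideal.mem_span_singleton]
    exact (mul_dvd_mul_iff_left (hπN i)).mp hdiff2
  set W : closeSubring k O π e ψ := ⟨(wfun, b1), hwmem⟩ with hW
  refine ⟨B0, by omega, ?_, ?_⟩
  · -- the F_{≥ B} statement
    set A := algebraMap (OgeB k O π e ψ B0) (FgeB k O π e ψ hψ B0) with hA
    have hliftB : ∀ z : closeSubring k O π e ψ,
        projFge k O π e ψ hψ B0 (algebraMap _ _ z) = A (toOgeB k O π e ψ B0 z) := fun z =>
      IsLocalization.Away.lift_eq (piO k O π e ψ hψ)
        (IsLocalization.map_units (M := Submonoid.powers (piGe k O π e ψ hψ B0)) _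
          ⟨piGe k O π e ψ hψ B0, Submonoid.mem_powers _⟩) z
    have hstep : toOgeB k O π e ψ B0 x
        = toOgeB k O π e ψ B0 ((piO k O π e ψ hψ) ^ N * W) := by
      apply Subtype.ext
      show toGe k O π e ψ B0 x = toGe k O π e ψ B0 ((piO k O π e ψ hψ) ^ N * W)
      refine Prod.ext ?_ ?_
      · funext i
        exact hw i.1 i.2
      · exact hxinf_eq
    set U := piGeUnit k O π e ψ hψ B0 with hU
    have hUval : (U : FgeB k O π e ψ hψ B0) = A (piGe k O π e ψ hψ B0) := rfl
    refine ⟨toOgeB k O π e ψ B0 W, ?_⟩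
    rw [← Units.mul_left_inj (U ^ (m : ℤ))]
    have hlhs : projFge k O π e ψ hψ B0 a * ((U ^ (m : ℤ) : _ˣ) : FgeB k O π e ψ hψ B0)
        = A (toOgeB k O π e ψ B0 x) := by
      rw [zpow_natCast, Units.val_pow_eq_pow_val, hUval]
      have h0 := congrArg (projFge k O π e ψ hψ B0) hxs
      rw [map_mul, ← hm, hliftB, hliftB, map_pow, map_pow] at h0
      exact h0
    rw [hlhs, mul_right_comm, ← Units.val_mul, ← zpow_add, ← hN,
      zpow_natCast, Units.val_pow_eq_pow_val, hUval, ← map_pow, ← map_mul, hstep,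
      map_mul, map_pow]
    rfl
  · -- the per-place statements
    intro i hi
    set Ki := FractionRing (O i)
    set φi := algebraMap (O i) Ki with hφi
    have hlifti : ∀ z : closeSubring k O π e ψ,
        locProj k O π e ψ hψ hπ i (algebraMap _ _ z) = φi (z.1.1 i) := fun z =>
      IsLocalization.Away.lift_eq (piO k O π e ψ hψ)
        (IsLocalization.map_units (M := nonZeroDivisors (O i)) _
          ⟨π i, mem_nonZeroDivisors_of_ne_zero (hπ i).ne_zero⟩) z
    have hπine : φi (π i) ≠ 0 := fun h =>
      (hπ i).ne_zero (IsFractionRing.injective _ _ (h.trans (map_zero φi).symm))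
    have hxi : locProj k O π e ψ hψ hπ i a * φi (π i) ^ m = φi (x.1.1 i) := by
      have h0 := congrArg (locProj k O π e ψ hψ hπ i) hxs
      rw [map_mul, ← hm, hlifti, hlifti] at h0
      have : ((piO k O π e ψ hψ) ^ m).1.1 i = (π i) ^ m := by
        rw [show ((piO k O π e ψ hψ) ^ m).1.1 i
          = projO k O π e ψ i ((piO k O π e ψ hψ) ^ m) from rfl, map_pow]
        rfl
      rw [this, map_pow] at h0
      exact h0
    constructor
    · refine ⟨wfun i, ?_⟩
      apply mul_right_cancel₀ (pow_ne_zero m hπine)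
      rw [hxi, hw i hi, map_mul, map_pow]
      rw [← zpow_natCast (φi (π i)) m, ← zpow_natCast (φi (π i)) N, mul_right_comm,
        ← zpow_add₀ hπine, hN]
    · rintro ⟨b, hb⟩
      have hx2 : φi (x.1.1 i) = φi (π i ^ (N + 1) * b) := by
        rw [← hxi, hb, map_mul, map_pow]
        rw [← zpow_natCast (φi (π i)) m, ← zpow_natCast (φi (π i)) (N + 1), mul_right_comm,
          ← zpow_add₀ hπine, show (n + 1) + (m : ℤ) = (((N + 1 : ℕ) : ℤ)) from by push_cast; omega]
      have hx3 : x.1.1 i = π i ^ (N + 1) * b := IsFractionRing.injective _ _ hx2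
      rw [hw i hi, pow_succ, mul_assoc] at hx3
      have : wfun i = π i * b := mul_left_cancel₀ (hπN i) hx3
      exact (hπ i).not_isUnit
        (isUnit_of_dvd_unit ⟨b, this⟩ (hwu i hi))
end
end

section
/- Let ∞ ∈ Spec F denote the point given by the kernel of the natural surjection F → F_∞ (a maximal ideal, so ∞ is a closed point). For each B ≥ 1, the map Spec F_{≥B} → Spec F induced by the projection F → F_{≥B} is an open immersion whose image is an open subset of Spec F containing ∞, and these images for B ≥ 1 form a fundamental system of open neighborhoods of ∞: every open subset of Spec F containing ∞ contains the image of Spec F_{≥B} for some B ≥ 1. -/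
open PowerSeries

set_option maxHeartbeats 1000000
set_option synthInstance.maxHeartbeats 400000

noncomputable section

variable (k : Type) [Field k]
variable (O : ℕ → Type) [∀ i, CommRing (O i)]
variable (π : ∀ i, O i) (e : ℕ → ℕ)
variable (ψ : ∀ i, ((PowerSeries k) ⧸ (Ideal.span {(X : PowerSeries k) ^ e i})) ≃+*
    ((O i) ⧸ (Ideal.span {π i ^ e i})))
variable (hψ : ∀ i, ψ i (Ideal.Quotient.mk _ (X : PowerSeries k)) = Ideal.Quotient.mk _ (π i))

variable [∀ i, IsDomain (O i)] (hπ : ∀ i, Irreducible (π i))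

/-- The point `∞ ∈ Spec F`, given by the kernel of `F → F_∞`. -/
def inftyPt : PrimeSpectrum (Fring k O π e ψ hψ) :=
  ⟨RingHom.ker (locProjInf k O π e ψ hψ), RingHom.ker_isPrime _⟩


/-! ### Auxiliary lemmas -/

section AuxCF
set_option linter.unusedSectionVars false

lemma CF_isUnit_of_mk_isUnit {R : Type*} [CommRing R] [IsLocalRing R] {I : Ideal R}
    (hI : I ≠ ⊤) {z : R} (h : IsUnit (Ideal.Quotient.mk I z)) : IsUnit z := by
  obtain ⟨b, hb⟩ := h.exists_right_inv
  obtain ⟨w, rfl⟩ := Ideal.Quotient.mk_surjective b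
  rw [← map_mul, ← map_one (Ideal.Quotient.mk I)] at hb
  have hm : z * w - 1 ∈ I := Ideal.Quotient.eq.mp hb
  have hm' : z * w - 1 ∈ IsLocalRing.maximalIdeal R := IsLocalRing.le_maximalIdeal hI hm
  have hzw : IsUnit (z * w) := by
    by_contra hcon
    have h1 : z * w ∈ IsLocalRing.maximalIdeal R :=
      (IsLocalRing.mem_maximalIdeal _).mpr (mem_nonunits_iff.mpr hcon)
    have h2 : (1 : R) ∈ IsLocalRing.maximalIdeal R := by
      simpa using sub_mem h1 hm'
    exact (IsLocalRing.maximalIdeal.isMaximal R).ne_top ((Ideal.eq_top_iff_one _).mpr h2)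
  exact isUnit_of_mul_isUnit_left hzw

lemma CF_isUnit_add_of_mem_max {R : Type*} [CommRing R] [IsLocalRing R] {z c : R}
    (hz : IsUnit z) (hc : c ∈ IsLocalRing.maximalIdeal R) : IsUnit (z + c) := by
  by_contra hcon
  have h1 : z + c ∈ IsLocalRing.maximalIdeal R :=
    (IsLocalRing.mem_maximalIdeal _).mpr (mem_nonunits_iff.mpr hcon)
  have h2 : z ∈ IsLocalRing.maximalIdeal R := by simpa using sub_mem h1 hc
  exact mem_nonunits_iff.mp ((IsLocalRing.mem_maximalIdeal _).mp h2) hz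

lemma CF_span_pow_cancel {R : Type*} [CommRing R] [IsDomain R] {w : R} (hw : w ≠ 0)
    {v n : ℕ} {a : R} (h : w ^ v * a ∈ Ideal.span {w ^ (n + v)}) :
    a ∈ Ideal.span {w ^ n} := by
  rw [Ideal.mem_span_singleton] at h ⊢
  obtain ⟨c, hc⟩ := h
  exact ⟨c, mul_left_cancel₀ (pow_ne_zero v hw) (by rw [hc]; ring)⟩

lemma ext_elem {x y : closeSubring k O π e ψ}
    (h1 : ∀ j, (x : ProdRing k O).1 j = (y : ProdRing k O).1 j)
    (h2 : (x : ProdRing k O).2 = (y : ProdRing k O).2) : x = y :=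
  Subtype.ext (Prod.ext (funext h1) h2)

/-- The idempotent `e_B ∈ O` supported on coordinates `i < B`. -/
def eB (B : ℕ) : closeSubring k O π e ψ :=
  ⟨(fun i => if i < B then 1 else 0, 0), by
    intro n hn
    refine ⟨max n B, le_max_left _ _, fun i hi => ⟨0, by simp, ?_⟩⟩
    have h : ¬ i < B := by omega
    simp [h]⟩

lemma eB_coe (B : ℕ) :
    ((eB k O π e ψ B : closeSubring k O π e ψ) : ProdRing k O)
      = (fun i => if i < B then 1 else 0, 0) := rfl

lemma piO_coe :
    ((piO k O π e ψ hψ : closeSubring k O π e ψ) : ProdRing k O)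
      = (π, (X : PowerSeries k)) := rfl

lemma eB_idem (B : ℕ) : eB k O π e ψ B * eB k O π e ψ B = eB k O π e ψ B := by
  apply ext_elem
  · intro j
    show (if j < B then (1 : O j) else 0) * (if j < B then 1 else 0)
      = (if j < B then 1 else 0)
    split <;> simp
  · show (0 : PowerSeries k) * 0 = 0
    simp

lemma toGe_eq_zero_iff (B : ℕ) (x : closeSubring k O π e ψ) :
    toGe k O π e ψ B x = 0 ↔
      (∀ i, B ≤ i → (x : ProdRing k O).1 i = 0) ∧ (x : ProdRing k O).2 = 0 := by
  constructor
  · intro h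
    have h1 := congrArg Prod.fst h
    have h2 := congrArg Prod.snd h
    exact ⟨fun i hi => congrFun h1 ⟨i, hi⟩, h2⟩
  · rintro ⟨h1, h2⟩
    exact Prod.ext (funext fun i => h1 i.1 i.2) h2

lemma toOgeB_eq_zero_iff (B : ℕ) (x : closeSubring k O π e ψ) :
    toOgeB k O π e ψ B x = 0 ↔ toGe k O π e ψ B x = 0 := by
  rw [Subtype.ext_iff]
  exact Iff.rfl

lemma projInf_surjective : Function.Surjective (projInf k O π e ψ) := by
  intro f
  choose y hy using fun i =>
    Ideal.Quotient.mk_surjective (I := Ideal.span {π i ^ e i})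
      (ψ i (Ideal.Quotient.mk _ f))
  exact ⟨⟨(y, f), fun n hn => ⟨n, le_rfl, fun i hi => ⟨y i, hy i, by simp⟩⟩⟩, rfl⟩

lemma locProjInf_algebraMap (x : closeSubring k O π e ψ) :
    locProjInf k O π e ψ hψ (algebraMap _ _ x)
      = algebraMap (PowerSeries k) (FractionRing (PowerSeries k)) (projInf k O π e ψ x) :=
  IsLocalization.Away.lift_eq
    (S := Localization.Away (piO k O π e ψ hψ))
    (g := (algebraMap (PowerSeries k) (FractionRing (PowerSeries k))).comp (projInf k O π e ψ))
    (piO k O π e ψ hψ)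
    (IsLocalization.map_units (M := nonZeroDivisors (PowerSeries k)) _
      ⟨(X : PowerSeries k), mem_nonZeroDivisors_of_ne_zero PowerSeries.X_ne_zero⟩) x

lemma projFge_algebraMap (B : ℕ) (x : closeSubring k O π e ψ) :
    projFge k O π e ψ hψ B (algebraMap _ _ x)
      = algebraMap (OgeB k O π e ψ B) (FgeB k O π e ψ hψ B) (toOgeB k O π e ψ B x) :=
  IsLocalization.Away.lift_eq
    (S := Localization.Away (piO k O π e ψ hψ))
    (g := (algebraMap (OgeB k O π e ψ B) (FgeB k O π e ψ hψ B)).comp (toOgeB k O π e ψ B))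
    (piO k O π e ψ hψ)
    (IsLocalization.map_units (M := Submonoid.powers (piGe k O π e ψ hψ B)) _
      ⟨piGe k O π e ψ hψ B, Submonoid.mem_powers _⟩) x

lemma locProjInf_surjective :
    Function.Surjective (locProjInf k O π e ψ hψ) := by
  intro z
  obtain ⟨⟨a, ⟨b, hb⟩⟩, hz⟩ := IsLocalization.mk'_surjective (nonZeroDivisors (PowerSeries k)) z
  have hb0 : b ≠ 0 := nonZeroDivisors.ne_zero hb
  obtain ⟨v, u, hbu⟩ := IsDiscreteValuationRing.eq_unit_mul_pow_irreducible hb0 X_irreducible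
  obtain ⟨s, hs⟩ := projInf_surjective k O π e ψ (a * (↑u⁻¹ : PowerSeries k))
  refine ⟨IsLocalization.mk' _ s
    (⟨piO k O π e ψ hψ ^ v, v, rfl⟩ : Submonoid.powers (piO k O π e ψ hψ)), ?_⟩
  have hXu : IsUnit (algebraMap (PowerSeries k) (FractionRing (PowerSeries k)) X) :=
    IsLocalization.map_units _ ⟨X, mem_nonZeroDivisors_of_ne_zero X_ne_zero⟩
  apply (hXu.pow v).mul_right_cancel
  have hw : (IsLocalization.mk' (Fring k O π e ψ hψ) s
        (⟨piO k O π e ψ hψ ^ v, v, rfl⟩ : Submonoid.powers (piO k O π e ψ hψ)))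
        * algebraMap _ _ (piO k O π e ψ hψ ^ v) = algebraMap _ _ s :=
    IsLocalization.mk'_spec _ _ _
  have h1 := congrArg (locProjInf k O π e ψ hψ) hw
  rw [map_mul, locProjInf_algebraMap, locProjInf_algebraMap] at h1
  have hp : projInf k O π e ψ (piO k O π e ψ hψ ^ v) = (X : PowerSeries k) ^ v := by
    rw [map_pow]; rfl
  rw [hp, map_pow] at h1
  rw [h1, hs]
  have hz' : z * algebraMap _ _ b = algebraMap _ _ a := by
    rw [← hz]; exact IsLocalization.mk'_spec _ _ _
  rw [hbu] at hz'
  calc algebraMap _ _ (a * (↑u⁻¹ : PowerSeries k))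
      = (z * algebraMap _ _ ((↑u : PowerSeries k) * X ^ v))
          * algebraMap _ _ ((↑u⁻¹ : PowerSeries k)) := by rw [hz', map_mul]
    _ = z * (algebraMap _ _ (X : PowerSeries k)) ^ v
          * algebraMap _ _ ((↑u : PowerSeries k) * ↑u⁻¹) := by
        rw [map_mul, map_mul, map_pow]; ring
    _ = z * (algebraMap _ _ (X : PowerSeries k)) ^ v := by
        rw [Units.mul_inv, map_one, mul_one]

lemma projFge_surjective (B : ℕ) : Function.Surjective (projFge k O π e ψ hψ B) := by
  intro z
  obtain ⟨n, a, hna⟩ := IsLocalization.Away.surj (piGe k O π e ψ hψ B) z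
  obtain ⟨s, hs⟩ := RingHom.rangeRestrict_surjective (toGe k O π e ψ B) a
  refine ⟨IsLocalization.mk' _ s
    (⟨piO k O π e ψ hψ ^ n, n, rfl⟩ : Submonoid.powers (piO k O π e ψ hψ)), ?_⟩
  have hPu : IsUnit (algebraMap (OgeB k O π e ψ B) (FgeB k O π e ψ hψ B)
      (piGe k O π e ψ hψ B)) := IsLocalization.Away.algebraMap_isUnit _
  apply (hPu.pow n).mul_right_cancel
  have hw : (IsLocalization.mk' (Fring k O π e ψ hψ) s
        (⟨piO k O π e ψ hψ ^ n, n, rfl⟩ : Submonoid.powers (piO k O π e ψ hψ)))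
        * algebraMap _ _ (piO k O π e ψ hψ ^ n) = algebraMap _ _ s :=
    IsLocalization.mk'_spec _ _ _
  have h1 := congrArg (projFge k O π e ψ hψ B) hw
  rw [map_mul, projFge_algebraMap, projFge_algebraMap, map_pow, map_pow] at h1
  calc projFge k O π e ψ hψ B (IsLocalization.mk' (Fring k O π e ψ hψ) s
        (⟨piO k O π e ψ hψ ^ n, n, rfl⟩ : Submonoid.powers (piO k O π e ψ hψ)))
        * algebraMap _ _ (piGe k O π e ψ hψ B) ^ n
      = algebraMap _ _ (toOgeB k O π e ψ B s) := h1
    _ = algebraMap _ _ a := by rw [show toOgeB k O π e ψ B s = a from hs]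
    _ = z * algebraMap _ _ (piGe k O π e ψ hψ B) ^ n := hna.symm

lemma ker_projFge (B : ℕ) (hπ : ∀ i, Irreducible (π i)) :
    RingHom.ker (projFge k O π e ψ hψ B)
      = Ideal.span {algebraMap _ (Fring k O π e ψ hψ) (eB k O π e ψ B)} := by
  apply le_antisymm
  · intro x hx
    rw [RingHom.mem_ker] at hx
    obtain ⟨n, s, hns⟩ := IsLocalization.Away.surj (piO k O π e ψ hψ) x
    have h1 : algebraMap (OgeB k O π e ψ B) (FgeB k O π e ψ hψ B)
        (toOgeB k O π e ψ B s) = 0 := by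
      rw [← projFge_algebraMap, ← hns, map_mul, hx, zero_mul]
    obtain ⟨⟨val, t, rfl⟩, hm⟩ :=
      (IsLocalization.map_eq_zero_iff (Submonoid.powers (piGe k O π e ψ hψ B)) _ _).mp h1
    have hm' : toOgeB k O π e ψ B (s * piO k O π e ψ hψ ^ t) = 0 := by
      rw [map_mul, map_pow]
      rw [mul_comm]
      exact hm
    rw [toOgeB_eq_zero_iff, toGe_eq_zero_iff] at hm'
    obtain ⟨hc1, hc2⟩ := hm'
    have hc : eB k O π e ψ B * (s * piO k O π e ψ hψ ^ t) = s * piO k O π e ψ hψ ^ t := by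
      apply ext_elem
      · intro j
        by_cases hj : j < B
        · show (if j < B then (1 : O j) else 0) * _ = _
          rw [if_pos hj, one_mul]
        · have h0 := hc1 j (by omega)
          show (if j < B then (1 : O j) else 0) * _ = _
          rw [if_neg hj, zero_mul, h0]
      · show (0 : PowerSeries k) * _ = _
        rw [zero_mul, hc2]
    have hmem : algebraMap _ (Fring k O π e ψ hψ) (s * piO k O π e ψ hψ ^ t)
        ∈ Ideal.span {algebraMap _ (Fring k O π e ψ hψ) (eB k O π e ψ B)} := by
      rw [← hc, map_mul]
      exact Ideal.mul_mem_right _ _ (Ideal.subset_span rfl)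
    obtain ⟨U, hU⟩ :=
      (IsLocalization.Away.algebraMap_isUnit (S := Fring k O π e ψ hψ)
        (piO k O π e ψ hψ)).pow (n + t)
    have hx2 : x * ↑U = algebraMap _ (Fring k O π e ψ hψ) (s * piO k O π e ψ hψ ^ t) := by
      rw [hU, pow_add, ← mul_assoc, hns, ← map_pow, ← map_mul]
    have hx3 : x = algebraMap _ (Fring k O π e ψ hψ) (s * piO k O π e ψ hψ ^ t) * ↑U⁻¹ := by
      rw [← hx2, Units.mul_inv_cancel_right]
    rw [hx3]
    exact Ideal.mul_mem_right _ _ hmem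
  · rw [Ideal.span_le, Set.singleton_subset_iff, SetLike.mem_coe, RingHom.mem_ker,
      projFge_algebraMap]
    have h0 : toOgeB k O π e ψ B (eB k O π e ψ B) = 0 := by
      rw [toOgeB_eq_zero_iff, toGe_eq_zero_iff]
      exact ⟨fun i hi => if_neg (by omega), rfl⟩
    rw [h0, map_zero]

lemma zl_eq_basicOpen (B : ℕ) :
    PrimeSpectrum.zeroLocus {algebraMap _ (Fring k O π e ψ hψ) (eB k O π e ψ B)} =
      ↑(PrimeSpectrum.basicOpen
        (1 - algebraMap _ (Fring k O π e ψ hψ) (eB k O π e ψ B))) := by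
  ext x
  simp only [PrimeSpectrum.mem_zeroLocus, Set.singleton_subset_iff, SetLike.mem_coe,
    PrimeSpectrum.mem_basicOpen]
  constructor
  · intro h h1
    have : (1 : Fring k O π e ψ hψ) ∈ x.asIdeal := by simpa using add_mem h h1
    exact x.isPrime.ne_top ((Ideal.eq_top_iff_one _).mpr this)
  · intro h
    have h0 : (algebraMap _ (Fring k O π e ψ hψ) (eB k O π e ψ B))
        * (1 - algebraMap _ (Fring k O π e ψ hψ) (eB k O π e ψ B)) ∈ x.asIdeal := by
      rw [mul_sub, mul_one, ← map_mul, eB_idem, sub_self]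
      exact zero_mem _
    rcases x.isPrime.mem_or_mem h0 with h' | h'
    · exact h'
    · exact absurd h' h

lemma range_comap_projFge (B : ℕ) (hπ : ∀ i, Irreducible (π i)) :
    Set.range (PrimeSpectrum.comap (projFge k O π e ψ hψ B))
      = PrimeSpectrum.zeroLocus {algebraMap _ (Fring k O π e ψ hψ) (eB k O π e ψ B)} := by
  rw [range_comap_of_surjective (hf := (projFge_surjective k O π e ψ hψ B)),
    ker_projFge k O π e ψ hψ B hπ, PrimeSpectrum.zeroLocus_span]

lemma inftyPt_mem_zl (B : ℕ) :
    inftyPt k O π e ψ hψ ∈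
      PrimeSpectrum.zeroLocus {algebraMap _ (Fring k O π e ψ hψ) (eB k O π e ψ B)} := by
  rw [PrimeSpectrum.mem_zeroLocus, Set.singleton_subset_iff, SetLike.mem_coe]
  show algebraMap _ _ (eB k O π e ψ B) ∈ RingHom.ker (locProjInf k O π e ψ hψ)
  rw [RingHom.mem_ker, locProjInf_algebraMap]
  show algebraMap (PowerSeries k) (FractionRing (PowerSeries k)) 0 = 0
  exact map_zero _

lemma exists_inv_factor [∀ i, IsLocalRing (O i)] (hirr : ∀ i, Irreducible (π i))
    (he : ∀ i, i ≤ e i)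
    (s : closeSubring k O π e ψ) (hs : (s : ProdRing k O).2 ≠ 0) :
    ∃ (B v : ℕ) (t : closeSubring k O π e ψ), 1 ≤ B ∧
      s * t = piO k O π e ψ hψ ^ v * (1 - eB k O π e ψ B) := by
  obtain ⟨v, u, hu⟩ := IsDiscreteValuationRing.eq_unit_mul_pow_irreducible hs X_irreducible
  obtain ⟨B₀, hB₀, hs0⟩ := s.2 (v + 1) (by omega)
  have claim1 : ∀ i, ∃ w : O i, IsUnit w ∧
      (B₀ ≤ i → (s : ProdRing k O).1 i = π i ^ v * w) := by
    intro i
    by_cases hi : B₀ ≤ i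
    · obtain ⟨y, hy, hyd⟩ := hs0 i hi
      obtain ⟨z, hz⟩ := Ideal.Quotient.mk_surjective
        (I := Ideal.span {π i ^ e i}) (ψ i (Ideal.Quotient.mk _ ((↑u : PowerSeries k))))
      have hei : v + 1 ≤ e i := le_trans (le_trans hB₀ hi) (he i)
      have hproper : Ideal.span {π i ^ e i} ≠ ⊤ := by
        simp only [ne_eq, Ideal.span_singleton_eq_top]
        intro hun
        exact (hirr i).not_isUnit ((isUnit_pow_iff (by omega)).mp hun)
      have hzu : IsUnit z := by
        apply CF_isUnit_of_mk_isUnit hproper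
        rw [hz]
        exact ((u.isUnit.map
          (Ideal.Quotient.mk (Ideal.span {(X : PowerSeries k) ^ e i}))).map (ψ i))
      have hyz : Ideal.Quotient.mk (Ideal.span {π i ^ e i}) y
          = Ideal.Quotient.mk _ (π i ^ v * z) := by
        calc Ideal.Quotient.mk (Ideal.span {π i ^ e i}) y
            = ψ i (Ideal.Quotient.mk _ ((↑u : PowerSeries k) * X ^ v)) := by rw [hy, hu]
          _ = ψ i (Ideal.Quotient.mk _ ((↑u : PowerSeries k)))
              * ψ i (Ideal.Quotient.mk _ (X : PowerSeries k)) ^ v := by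
              rw [map_mul, map_pow, map_mul, map_pow]
          _ = Ideal.Quotient.mk _ (π i ^ v * z) := by
              rw [hψ i, ← hz, map_mul, map_pow]; ring
      have hym : y - π i ^ v * z ∈ Ideal.span {π i ^ (v + 1)} :=
        Ideal.span_singleton_le_span_singleton.mpr (pow_dvd_pow _ hei)
          (Ideal.Quotient.eq.mp hyz)
      have hsm : (s : ProdRing k O).1 i - π i ^ v * z ∈ Ideal.span {π i ^ (v + 1)} := by
        have hrw : (s : ProdRing k O).1 i - π i ^ v * z
            = ((s : ProdRing k O).1 i - y) + (y - π i ^ v * z) := by ring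
        rw [hrw]
        exact add_mem hyd hym
      obtain ⟨c, hc⟩ := Ideal.mem_span_singleton.mp hsm
      refine ⟨z + π i * c, ?_, fun _ => ?_⟩
      · apply CF_isUnit_add_of_mem_max hzu
        exact Ideal.mul_mem_right _ _
          ((IsLocalRing.mem_maximalIdeal _).mpr (mem_nonunits_iff.mpr (hirr i).not_isUnit))
      · linear_combination hc
    · exact ⟨1, isUnit_one, fun h => absurd h hi⟩
  choose w hwu hws using claim1
  choose tf htf using fun i => (hwu i).exists_right_inv
  have tmem : ((fun i => if B₀ ≤ i then tf i else 0, (↑u⁻¹ : PowerSeries k)) : ProdRing k O)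
      ∈ closeSubring k O π e ψ := by
    intro n hn
    obtain ⟨B₁, hB₁, hs1⟩ := s.2 (n + v) (by omega)
    refine ⟨max B₁ B₀, le_trans (by omega) (le_max_left _ _), fun i hi => ?_⟩
    have hiB₀ : B₀ ≤ i := le_trans (le_max_right _ _) hi
    have hiB₁ : B₁ ≤ i := le_trans (le_max_left _ _) hi
    obtain ⟨y, hy, hyd⟩ := hs1 i hiB₁
    obtain ⟨z, hz⟩ := Ideal.Quotient.mk_surjective
      (I := Ideal.span {π i ^ e i}) (ψ i (Ideal.Quotient.mk _ ((↑u⁻¹ : PowerSeries k))))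
    refine ⟨z, hz, ?_⟩
    have hei : n + v ≤ e i := le_trans (le_trans hB₁ hiB₁) (he i)
    have h1 : Ideal.Quotient.mk (Ideal.span {π i ^ e i}) (y * z)
        = Ideal.Quotient.mk _ (π i ^ v) := by
      have hX : (s : ProdRing k O).2 * (↑u⁻¹ : PowerSeries k) = X ^ v := by
        rw [hu]
        calc (↑u : PowerSeries k) * X ^ v * (↑u⁻¹ : PowerSeries k)
            = X ^ v * ((↑u : PowerSeries k) * ↑u⁻¹) := by ring
          _ = X ^ v := by rw [Units.mul_inv, mul_one]
      calc Ideal.Quotient.mk (Ideal.span {π i ^ e i}) (y * z)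
          = ψ i (Ideal.Quotient.mk _ ((s : ProdRing k O).2 * (↑u⁻¹ : PowerSeries k))) := by
            rw [map_mul, hy, hz, ← map_mul, ← map_mul]
        _ = ψ i (Ideal.Quotient.mk _ (X : PowerSeries k)) ^ v := by rw [hX, map_pow, map_pow]
        _ = Ideal.Quotient.mk _ (π i ^ v) := by rw [hψ i, map_pow]
    have h2 : y * z - π i ^ v ∈ Ideal.span {π i ^ (n + v)} :=
      Ideal.span_singleton_le_span_singleton.mpr (pow_dvd_pow _ hei)
        (Ideal.Quotient.eq.mp h1)
    have h3 : (s : ProdRing k O).1 i * z - π i ^ v ∈ Ideal.span {π i ^ (n + v)} := by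
      have hrw : (s : ProdRing k O).1 i * z - π i ^ v
          = ((s : ProdRing k O).1 i - y) * z + (y * z - π i ^ v) := by ring
      rw [hrw]
      exact add_mem (Ideal.mul_mem_right _ _ hyd) h2
    have h4 : π i ^ v * (w i * (z - tf i)) ∈ Ideal.span {π i ^ (n + v)} := by
      have hrw : π i ^ v * (w i * (z - tf i)) = (s : ProdRing k O).1 i * z - π i ^ v := by
        linear_combination (-z) * (hws i hiB₀) - (π i ^ v) * (htf i)
      rw [hrw]
      exact h3
    have h5 : w i * (z - tf i) ∈ Ideal.span {π i ^ n} :=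
      CF_span_pow_cancel (hirr i).ne_zero h4
    have h6 : z - tf i ∈ Ideal.span {π i ^ n} := by
      have hrw : z - tf i = tf i * (w i * (z - tf i)) := by
        linear_combination (tf i - z) * (htf i)
      rw [hrw]
      exact Ideal.mul_mem_left _ _ h5
    have h7 := neg_mem h6
    rw [neg_sub] at h7
    simpa [hiB₀] using h7
  refine ⟨B₀, v, ⟨_, tmem⟩, by omega, ?_⟩
  apply ext_elem
  · intro j
    show (s : ProdRing k O).1 j * (if B₀ ≤ j then tf j else 0)
      = π j ^ v * ((1 : O j) - if j < B₀ then 1 else 0)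
    by_cases hj : B₀ ≤ j
    · rw [if_pos hj, if_neg (by omega), sub_zero, hws j hj, mul_assoc, htf j, mul_one]
    · rw [if_neg hj, if_pos (by omega), sub_self, mul_zero, mul_zero]
  · show (s : ProdRing k O).2 * (↑u⁻¹ : PowerSeries k)
      = (X : PowerSeries k) ^ v * ((1 : PowerSeries k) - 0)
    rw [hu, sub_zero, mul_one]
    calc (↑u : PowerSeries k) * X ^ v * (↑u⁻¹ : PowerSeries k)
        = X ^ v * ((↑u : PowerSeries k) * ↑u⁻¹) := by ring
      _ = X ^ v := by rw [Units.mul_inv, mul_one]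

end AuxCF

theorem statement_6
    (p : ℕ) (hp : p.Prime)
    (k : Type) [Field k] [CharP k p] [ExpChar k p] [PerfectRing k p]
    (O : ℕ → Type) [∀ i, CommRing (O i)] [∀ i, IsDomain (O i)]
    [∀ i, IsDiscreteValuationRing (O i)] [∀ i, CharZero (O i)]
    (π : ∀ i, O i) (hπ : ∀ i, Irreducible (π i))
    [∀ i, IsAdicComplete (Ideal.span {π i}) (O i)]
    (ρ : ∀ i, ((O i) ⧸ (Ideal.span {π i})) ≃+* k)
    (e : ℕ → ℕ) (he : ∀ i, i ≤ e i)
    (hpe : ∀ i, Ideal.span {((p : O i))} = Ideal.span {π i ^ e i})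
    (ψ : ∀ i, ((PowerSeries k) ⧸ (Ideal.span {(X : PowerSeries k) ^ e i})) ≃+*
      ((O i) ⧸ (Ideal.span {π i ^ e i})))
    (hψ : ∀ i, ψ i (Ideal.Quotient.mk _ (X : PowerSeries k)) = Ideal.Quotient.mk _ (π i)) :
    (RingHom.ker (locProjInf k O π e ψ hψ)).IsMaximal
    ∧ IsClosed ({inftyPt k O π e ψ hψ} : Set (PrimeSpectrum (Fring k O π e ψ hψ)))
    ∧ (∀ B, 1 ≤ B →
        Topology.IsOpenEmbedding (PrimeSpectrum.comap (projFge k O π e ψ hψ B))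
        ∧ IsOpen (Set.range (PrimeSpectrum.comap (projFge k O π e ψ hψ B)))
        ∧ inftyPt k O π e ψ hψ ∈ Set.range (PrimeSpectrum.comap (projFge k O π e ψ hψ B)))
    ∧ ∀ U : Set (PrimeSpectrum (Fring k O π e ψ hψ)), IsOpen U → inftyPt k O π e ψ hψ ∈ U →
        ∃ B, 1 ≤ B ∧ Set.range (PrimeSpectrum.comap (projFge k O π e ψ hψ B)) ⊆ U := by
  have hmax : (RingHom.ker (locProjInf k O π e ψ hψ)).IsMaximal :=
    RingHom.ker_isMaximal_of_surjective _ (locProjInf_surjective k O π e ψ hψ)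
  refine ⟨hmax, ?_, ?_, ?_⟩
  · rw [PrimeSpectrum.isClosed_singleton_iff_isMaximal]
    exact hmax
  · intro B hB
    have hsurj := projFge_surjective k O π e ψ hψ B
    have hrange := range_comap_projFge k O π e ψ hψ B hπ
    have hopen : IsOpen (Set.range (PrimeSpectrum.comap (projFge k O π e ψ hψ B))) := by
      rw [hrange, zl_eq_basicOpen]
      exact (PrimeSpectrum.basicOpen _).2
    refine ⟨⟨(PrimeSpectrum.isClosedEmbedding_comap_of_surjective _ _ hsurj).toIsEmbedding,
      hopen⟩, hopen, ?_⟩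
    rw [hrange]
    exact inftyPt_mem_zl k O π e ψ hψ B
  · intro U hU hmemU
    obtain ⟨V, ⟨f, rfl⟩, hmemV, hVU⟩ :=
      PrimeSpectrum.isTopologicalBasis_basic_opens.isOpen_iff.mp hU _ hmemU
    have hf : locProjInf k O π e ψ hψ f ≠ 0 := by
      intro h0
      exact ((PrimeSpectrum.mem_basicOpen _ _).mp hmemV) (RingHom.mem_ker.mpr h0)
    obtain ⟨m, s, hms⟩ := IsLocalization.Away.surj (piO k O π e ψ hψ) f
    have hXne : (algebraMap (PowerSeries k) (FractionRing (PowerSeries k)) X) ≠ 0 :=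
      fun hh => X_ne_zero (IsFractionRing.to_map_eq_zero_iff.mp hh)
    have hs2 : (s : ProdRing k O).2 ≠ 0 := by
      intro h0
      have h1 : locProjInf k O π e ψ hψ (algebraMap _ _ s) = 0 := by
        rw [locProjInf_algebraMap]
        rw [show projInf k O π e ψ s = (s : ProdRing k O).2 from rfl, h0, map_zero]
      rw [← hms, map_mul, map_pow, locProjInf_algebraMap] at h1
      rw [show projInf k O π e ψ (piO k O π e ψ hψ) = (X : PowerSeries k) from rfl] at h1
      rcases mul_eq_zero.mp h1 with h | h
      · exact hf h
      · exact hXne (pow_eq_zero_iff'.mp h).1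
    obtain ⟨B, v, t, hB1, hst⟩ := exists_inv_factor k O π e ψ hψ hπ he s hs2
    refine ⟨B, hB1, ?_⟩
    rw [range_comap_projFge k O π e ψ hψ B hπ]
    intro x hx
    apply hVU
    have hε : algebraMap _ (Fring k O π e ψ hψ) (eB k O π e ψ B) ∈ x.asIdeal :=
      (PrimeSpectrum.mem_zeroLocus _ _).mp hx rfl
    obtain ⟨Uu, hUu⟩ :=
      (IsLocalization.Away.algebraMap_isUnit (S := Fring k O π e ψ hψ)
        (piO k O π e ψ hψ)).pow v
    have key : (1 : Fring k O π e ψ hψ)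
        - algebraMap _ (Fring k O π e ψ hψ) (eB k O π e ψ B) ∈ Ideal.span {f} := by
      have hcalc : ((1 : Fring k O π e ψ hψ)
            - algebraMap _ (Fring k O π e ψ hψ) (eB k O π e ψ B)) * ↑Uu
          = f * ((algebraMap _ (Fring k O π e ψ hψ) (piO k O π e ψ hψ)) ^ m
              * algebraMap _ (Fring k O π e ψ hψ) t) := by
        rw [hUu, ← mul_assoc, hms, ← map_mul, hst, map_mul, map_pow, map_sub, map_one]
        ring
      rw [Ideal.mem_span_singleton]
      refine ⟨(algebraMap _ (Fring k O π e ψ hψ) (piO k O π e ψ hψ)) ^ m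
        * algebraMap _ (Fring k O π e ψ hψ) t * ↑Uu⁻¹, ?_⟩
      rw [← mul_assoc, ← hcalc, Units.mul_inv_cancel_right]
    show x ∈ ↑(PrimeSpectrum.basicOpen f)
    rw [PrimeSpectrum.mem_basicOpen]
    intro hfx
    have h1 : (1 : Fring k O π e ψ hψ)
        - algebraMap _ (Fring k O π e ψ hψ) (eB k O π e ψ B) ∈ x.asIdeal :=
      (Ideal.span_singleton_le_iff_mem _).mpr hfx key
    have h2 : (1 : Fring k O π e ψ hψ) ∈ x.asIdeal := by simpa using add_mem hε h1
    exact x.isPrime.ne_top ((Ideal.eq_top_iff_one _).mpr h2)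
end
end
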